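/- arXiv:2109.10116 — 4 statements merged into one kernel-verified Lean document; each statement's English description precedes it below -/
import Mathlib

section
/- Let a_1,...,a_n be real numbers and λ ≥ 0. Then the Lebesgue measure of the set {x ∈ [0,1] : |Σ_{j=1}^n a_j r_j(x)| > λ (Σ_{j=1}^n a_j²)^{1/2}} is at most 2e^{-λ²/2}, where r_j is the j-th Rademacher function. -/
open Real MeasureTheory

/-- Sup norm of `f` on `[0, 2π]`. -/
noncomputable def supNorm (f : ℝ → ℝ) : ℝ := ⨆ x : Set.Icc (0:ℝ) (2*π), |f (x : ℝ)|

/-- L¹ norm of `f` on `(0, 2π)`. -/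
noncomputable def l1Norm (f : ℝ → ℝ) : ℝ := ∫ x in (0:ℝ)..(2*π), |f x|

/-- `f` is a real trigonometric polynomial of degree at most `r`. -/
def IsTrigPoly (r : ℝ) (f : ℝ → ℝ) : Prop :=
  ∃ (A : ℝ) (a b : ℕ → ℝ), f = fun x =>
    A + ∑ k ∈ Finset.Icc 1 ⌊r⌋₊, (a k * Real.cos ((k:ℝ) * x) + b k * Real.sin ((k:ℝ) * x))

/-- The `n`-th Rademacher function. -/
noncomputable def rademacher (n : ℕ) (x : ℝ) : ℝ := Real.sign (Real.sin (2^n * π * x))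

noncomputable def aCoeff (f : ℝ → ℝ) (k : ℕ) : ℝ :=
  (1/π) * ∫ x in (0:ℝ)..(2*π), f x * Real.cos ((k:ℝ)*x)

noncomputable def bCoeff (f : ℝ → ℝ) (k : ℕ) : ℝ :=
  (1/π) * ∫ x in (0:ℝ)..(2*π), f x * Real.sin ((k:ℝ)*x)

/-- The `n`-th dyadic block of the Fourier series of `f`. -/
noncomputable def delta (f : ℝ → ℝ) (n : ℕ) (x : ℝ) : ℝ :=
  if n = 0 then aCoeff f 0 / 2
  else ∑ k ∈ Finset.Ico (2^(n-1)) (2^n),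
    (aCoeff f k * Real.cos ((k:ℝ)*x) + bCoeff f k * Real.sin ((k:ℝ)*x))

/-- The QC-norm of Kashin and Temlyakov. -/
noncomputable def qcNorm (f : ℝ → ℝ) : ℝ :=
  ∫ ω in (0:ℝ)..1, supNorm (fun x => ∑' n : ℕ, rademacher n ω * delta f n x)

lemma radm_meas (n : ℕ) : Measurable (rademacher n) := by
  unfold rademacher Real.sign
  have h : Measurable fun x : ℝ => Real.sin (2^n * π * x) :=
    Real.measurable_sin.comp (measurable_const.mul measurable_id)
  exact Measurable.ite (measurableSet_lt h measurable_const) measurable_const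
    (Measurable.ite (measurableSet_lt measurable_const h) measurable_const measurable_const)

lemma radm_abs_le (n : ℕ) (x : ℝ) : |rademacher n x| ≤ 1 := by
  rcases Real.sign_apply_eq (Real.sin (2^n * π * x)) with h | h | h <;>
    simp [rademacher, h]

lemma radm_succ (n : ℕ) (x : ℝ) : rademacher (n+1) x = rademacher n (2*x) := by
  unfold rademacher; ring_nf

lemma radm_periodic (n : ℕ) : Function.Periodic (rademacher (n+1)) 1 := by
  intro x
  unfold rademacher
  congr 1
  have : 2^(n+1) * π * (x + 1) = 2^(n+1) * π * x + (2^n : ℤ) * (2 * π) := by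
    push_cast; ring
  rw [this, Real.sin_add_int_mul_two_pi]

lemma radm_one_pos {x : ℝ} (h0 : 0 < x) (h1 : x < 1/2) : rademacher 1 x = 1 := by
  have h : (0:ℝ) < Real.sin (2^1 * π * x) := by
    apply Real.sin_pos_of_pos_of_lt_pi
    · positivity
    · nlinarith [Real.pi_pos]
  rw [rademacher, Real.sign_of_pos h]

lemma radm_one_neg {x : ℝ} (h0 : 1/2 < x) (h1 : x < 1) : rademacher 1 x = -1 := by
  have hs : Real.sin (2^1 * π * x) < 0 := by
    have h2 : (2:ℝ)^1 * π * x = (2 * π * x - π) + π := by ring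
    rw [h2, Real.sin_add_pi]
    have : (0:ℝ) < Real.sin (2 * π * x - π) := by
      apply Real.sin_pos_of_pos_of_lt_pi
      · nlinarith [Real.pi_pos]
      · nlinarith [Real.pi_pos]
    linarith
  rw [rademacher, Real.sign_of_neg hs]

lemma radm_exp_meas (n : ℕ) (c : ℕ → ℝ) :
    Measurable fun x => Real.exp (∑ j ∈ Finset.range n, c j * rademacher (j+1) x) :=
  Real.measurable_exp.comp (Finset.measurable_sum _ fun j _ =>
    (measurable_const.mul (radm_meas (j+1))))

lemma radm_intInt (n : ℕ) (c : ℕ → ℝ) (a b : ℝ) :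
    IntervalIntegrable (fun x => Real.exp (∑ j ∈ Finset.range n, c j * rademacher (j+1) x))
      volume a b := by
  rw [intervalIntegrable_iff]
  apply Integrable.mono' (g := fun _ => Real.exp (∑ j ∈ Finset.range n, |c j|))
  · exact integrableOn_const measure_Ioc_lt_top.ne
  · exact (radm_exp_meas n c).aestronglyMeasurable
  · filter_upwards with x
    rw [Real.norm_eq_abs, Real.abs_exp, Real.exp_le_exp]
    calc ∑ j ∈ Finset.range n, c j * rademacher (j+1) x
        ≤ ∑ j ∈ Finset.range n, |c j * rademacher (j+1) x| :=
          Finset.sum_le_sum fun j _ => le_abs_self _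
      _ ≤ ∑ j ∈ Finset.range n, |c j| := Finset.sum_le_sum fun j _ => by
          rw [abs_mul]
          calc |c j| * |rademacher (j+1) x| ≤ |c j| * 1 :=
                mul_le_mul_of_nonneg_left (radm_abs_le _ _) (abs_nonneg _)
            _ = |c j| := mul_one _

lemma radm_mgf (n : ℕ) : ∀ c : ℕ → ℝ,
    (∫ x in (0:ℝ)..1, Real.exp (∑ j ∈ Finset.range n, c j * rademacher (j+1) x))
      = ∏ j ∈ Finset.range n, Real.cosh (c j) := by
  induction n with
  | zero => intro c; simp
  | succ n ih =>
    intro c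
    set g : ℝ → ℝ := fun y => Real.exp (∑ j ∈ Finset.range n, c (j+1) * rademacher (j+1) y)
      with hg
    have hgper : Function.Periodic g 1 := by
      intro x
      simp only [hg]
      congr 1
      exact Finset.sum_congr rfl fun j _ => by rw [radm_periodic j x]
    have hsplit := (intervalIntegral.integral_add_adjacent_intervals
      (radm_intInt (n+1) c 0 (1/2)) (radm_intInt (n+1) c (1/2) 1))
    have h1 : (∫ x in (0:ℝ)..(1/2),
        Real.exp (∑ j ∈ Finset.range (n+1), c j * rademacher (j+1) x))
        = Real.exp (c 0) * ((2:ℝ)⁻¹ * ∫ y in (0:ℝ)..1, g y) := by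
      have e1 : (∫ x in (0:ℝ)..(1/2),
          Real.exp (∑ j ∈ Finset.range (n+1), c j * rademacher (j+1) x))
          = ∫ x in (0:ℝ)..(1/2), Real.exp (c 0) * g (2*x) := by
        rw [intervalIntegral.integral_of_le (by norm_num),
            intervalIntegral.integral_of_le (by norm_num),
            MeasureTheory.integral_Ioc_eq_integral_Ioo,
            MeasureTheory.integral_Ioc_eq_integral_Ioo]
        apply setIntegral_congr_fun measurableSet_Ioo
        intro x hx
        simp only [hg, Finset.sum_range_succ', Real.exp_add, radm_one_pos hx.1 hx.2, mul_one]
        rw [mul_comm]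
        congr 2
        exact Finset.sum_congr rfl fun j _ => by rw [radm_succ (j+1) x]
      rw [e1, intervalIntegral.integral_const_mul]
      congr 1
      rw [intervalIntegral.integral_comp_mul_left g two_ne_zero]
      norm_num
    have h2 : (∫ x in (1/2:ℝ)..1,
        Real.exp (∑ j ∈ Finset.range (n+1), c j * rademacher (j+1) x))
        = Real.exp (-c 0) * ((2:ℝ)⁻¹ * ∫ y in (0:ℝ)..1, g y) := by
      have e1 : (∫ x in (1/2:ℝ)..1,
          Real.exp (∑ j ∈ Finset.range (n+1), c j * rademacher (j+1) x))
          = ∫ x in (1/2:ℝ)..1, Real.exp (-c 0) * g (2*x) := by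
        rw [intervalIntegral.integral_of_le (by norm_num),
            intervalIntegral.integral_of_le (by norm_num),
            MeasureTheory.integral_Ioc_eq_integral_Ioo,
            MeasureTheory.integral_Ioc_eq_integral_Ioo]
        apply setIntegral_congr_fun measurableSet_Ioo
        intro x hx
        simp only [hg, Finset.sum_range_succ', Real.exp_add, radm_one_neg hx.1 hx.2,
          mul_neg_one]
        rw [mul_comm]
        congr 2
        exact Finset.sum_congr rfl fun j _ => by rw [radm_succ (j+1) x]
      rw [e1, intervalIntegral.integral_const_mul]
      congr 1
      rw [intervalIntegral.integral_comp_mul_left g two_ne_zero]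
      have e2 : (∫ y in (2*(1/2):ℝ)..(2*1), g y) = ∫ y in (0:ℝ)..1, g y := by
        have := hgper.intervalIntegral_add_eq 1 0
        norm_num at this ⊢
        exact this
      rw [e2]
      norm_num
    rw [← hsplit, h1, h2, ih (fun j => c (j+1)), Finset.prod_range_succ']
    rw [Real.cosh_eq]
    ring

lemma radm_chernoff (n : ℕ) (c : ℕ → ℝ) (b : ℝ) :
    volume {x ∈ Set.Icc (0:ℝ) 1 | b < ∑ j ∈ Finset.range n, c j * rademacher (j+1) x}
      ≤ ENNReal.ofReal (Real.exp (-b) * ∏ j ∈ Finset.range n, Real.cosh (c j)) := by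
  set S : ℝ → ℝ := fun x => ∑ j ∈ Finset.range n, c j * rademacher (j+1) x with hS
  have hSmeas : Measurable S :=
    Finset.measurable_sum _ fun j _ => measurable_const.mul (radm_meas (j+1))
  set μ := volume.restrict (Set.Icc (0:ℝ) 1) with hμ
  have hset : {x ∈ Set.Icc (0:ℝ) 1 | b < S x} = {x | b < S x} ∩ Set.Icc (0:ℝ) 1 := by
    ext x; simp [and_comm]
  have hvol : volume {x ∈ Set.Icc (0:ℝ) 1 | b < S x} = μ {x | b < S x} := by
    rw [hset, hμ, Measure.restrict_apply (measurableSet_lt measurable_const hSmeas)]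
  have hint : Integrable (fun x => Real.exp (S x)) μ := by
    have := (radm_intInt n c 0 1)
    rw [intervalIntegrable_iff_integrableOn_Ioc_of_le (by norm_num)] at this
    rw [hμ]
    exact ((integrableOn_Icc_iff_integrableOn_Ioc enorm_ne_top).2 this)
  have hmarkov := mul_meas_ge_le_integral_of_nonneg
    (f := fun x => Real.exp (S x)) (μ := μ)
    (ae_of_all _ fun x => (Real.exp_pos _).le) hint (Real.exp b)
  have hIval : (∫ x, Real.exp (S x) ∂μ) = ∏ j ∈ Finset.range n, Real.cosh (c j) := by
    show (∫ x in Set.Icc (0:ℝ) 1, Real.exp (S x)) = _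
    rw [MeasureTheory.integral_Icc_eq_integral_Ioc,
      ← intervalIntegral.integral_of_le (by norm_num : (0:ℝ) ≤ 1)]
    exact radm_mgf n c
  have hsub : μ {x | b < S x} ≤ μ {x | Real.exp b ≤ Real.exp (S x)} :=
    measure_mono fun x hx => Real.exp_le_exp.2 (le_of_lt hx)
  have hfin : μ {x | b < S x} ≠ ⊤ := by
    apply ne_of_lt
    calc μ {x | b < S x} ≤ μ Set.univ := measure_mono (Set.subset_univ _)
      _ = volume (Set.Icc (0:ℝ) 1) := by rw [hμ, Measure.restrict_apply_univ]
      _ < ⊤ := measure_Icc_lt_top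
  have hfin2 : μ {x | Real.exp b ≤ Real.exp (S x)} ≠ ⊤ := by
    apply ne_of_lt
    calc μ _ ≤ μ Set.univ := measure_mono (Set.subset_univ _)
      _ = volume (Set.Icc (0:ℝ) 1) := by rw [hμ, Measure.restrict_apply_univ]
      _ < ⊤ := measure_Icc_lt_top
  rw [hvol]
  have htoReal : (μ {x | b < S x}).toReal ≤
      Real.exp (-b) * ∏ j ∈ Finset.range n, Real.cosh (c j) := by
    have h1 : (μ {x | b < S x}).toReal ≤ (μ {x | Real.exp b ≤ Real.exp (S x)}).toReal :=
      ENNReal.toReal_mono hfin2 hsub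
    have h2 : Real.exp b * (μ {x | Real.exp b ≤ Real.exp (S x)}).toReal ≤
        ∏ j ∈ Finset.range n, Real.cosh (c j) := by
      rw [← hIval]; exact hmarkov
    nlinarith [Real.exp_pos b, Real.exp_pos (-b), Real.exp_neg b,
      ENNReal.toReal_nonneg (a := μ {x | b < S x}), mul_le_mul_of_nonneg_left h2 (Real.exp_pos (-b)).le,
      Real.exp_neg b ▸ (inv_mul_cancel₀ (Real.exp_ne_zero b))]
  calc μ {x | b < S x} = ENNReal.ofReal (μ {x | b < S x}).toReal := (ENNReal.ofReal_toReal hfin).symm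
    _ ≤ _ := ENNReal.ofReal_le_ofReal htoReal

lemma sum_Icc_one (n : ℕ) (f : ℕ → ℝ) :
    ∑ j ∈ Finset.Icc 1 n, f j = ∑ j ∈ Finset.range n, f (j+1) := by
  rw [← Finset.Ico_add_one_right_eq_Icc, Finset.sum_Ico_eq_sum_range]
  exact Finset.sum_congr (by norm_num) fun j _ => by rw [add_comm]

/-- Subgaussian tail estimate for Rademacher sums. -/
theorem rademacher_tail (n : ℕ) (a : ℕ → ℝ) (lam : ℝ) (hlam : 0 ≤ lam) :
    volume {x ∈ Set.Icc (0:ℝ) 1 |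
        lam * Real.sqrt (∑ j ∈ Finset.Icc 1 n, (a j)^2) <
          |∑ j ∈ Finset.Icc 1 n, a j * rademacher j x|} ≤
      ENNReal.ofReal (2 * Real.exp (-lam^2/2)) := by
  set σ2 := ∑ j ∈ Finset.Icc 1 n, (a j)^2 with hσ2
  have hσ2nn : 0 ≤ σ2 := Finset.sum_nonneg fun j _ => sq_nonneg _
  rcases eq_or_lt_of_le hlam with hlam0 | hlampos
  · -- lam = 0
    calc volume _ ≤ volume (Set.Icc (0:ℝ) 1) :=
          measure_mono (Set.sep_subset _ _)
      _ = 1 := by rw [Real.volume_Icc]; norm_num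
      _ ≤ ENNReal.ofReal (2 * Real.exp (-lam^2/2)) := by
          rw [← hlam0]
          norm_num
  rcases eq_or_lt_of_le hσ2nn with hσ20 | hσ2pos
  · -- σ2 = 0 : all coefficients vanish
    have hz : ∀ j ∈ Finset.Icc 1 n, a j = 0 := by
      intro j hj
      have := (Finset.sum_eq_zero_iff_of_nonneg (fun j _ => sq_nonneg (a j))).1 hσ20.symm j hj
      exact pow_eq_zero_iff (n := 2) (by norm_num) |>.1 this
    have hempty : {x ∈ Set.Icc (0:ℝ) 1 |
        lam * Real.sqrt σ2 < |∑ j ∈ Finset.Icc 1 n, a j * rademacher j x|} = ∅ := by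
      ext x
      simp only [Set.mem_setOf_eq, Set.mem_empty_iff_false, iff_false, not_and]
      intro _
      rw [Finset.sum_eq_zero fun j hj => by rw [hz j hj, zero_mul], ← hσ20, Real.sqrt_zero,
        mul_zero, abs_zero]
      exact lt_irrefl 0
    rw [hempty]
    simp
  · -- main case
    set σ := Real.sqrt σ2 with hσ
    have hσpos : 0 < σ := Real.sqrt_pos.2 hσ2pos
    have hσsq : σ^2 = σ2 := Real.sq_sqrt hσ2nn
    set t := lam / σ with ht
    have htpos : 0 < t := div_pos hlampos hσpos
    have htls : t * (lam * σ) = lam^2 := by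
      field_simp [ht]; rw [ht, div_mul_cancel₀ _ hσpos.ne']
    set S : ℝ → ℝ := fun x => ∑ j ∈ Finset.Icc 1 n, a j * rademacher j x with hSdef
    have hts : ∀ x, ∑ j ∈ Finset.range n, (t * a (j+1)) * rademacher (j+1) x = t * S x := by
      intro x
      rw [hSdef, Finset.mul_sum, sum_Icc_one n (fun j => t * (a j * rademacher j x))]
      exact Finset.sum_congr rfl fun j _ => by ring
    have hts' : ∀ x, ∑ j ∈ Finset.range n, (-(t * a (j+1))) * rademacher (j+1) x = -(t * S x) := by
      intro x
      rw [← hts x, ← Finset.sum_neg_distrib]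
      exact Finset.sum_congr rfl fun j _ => by ring
    have hsubset : {x ∈ Set.Icc (0:ℝ) 1 | lam * σ < |S x|} ⊆
        {x ∈ Set.Icc (0:ℝ) 1 | lam^2 < ∑ j ∈ Finset.range n, (t * a (j+1)) * rademacher (j+1) x}
        ∪ {x ∈ Set.Icc (0:ℝ) 1 |
            lam^2 < ∑ j ∈ Finset.range n, (-(t * a (j+1))) * rademacher (j+1) x} := by
      intro x ⟨hxI, hx⟩
      have h2 : lam^2 < |t * S x| := by
        rw [abs_mul, abs_of_pos htpos, ← htls]
        exact mul_lt_mul_of_pos_left hx htpos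
      rcases lt_abs.1 h2 with h | h
      · left; exact ⟨hxI, by rw [hts x]; exact h⟩
      · right; exact ⟨hxI, by rw [hts' x]; exact h⟩
    -- real bound on each Chernoff term
    have hprodbound : ∀ c : ℕ → ℝ, (∀ j, c j ^ 2 = (t * a (j+1))^2) →
        Real.exp (-lam^2) * ∏ j ∈ Finset.range n, Real.cosh (c j) ≤ Real.exp (-lam^2/2) := by
      intro c hc
      have h1 : ∏ j ∈ Finset.range n, Real.cosh (c j)
          ≤ ∏ j ∈ Finset.range n, Real.exp (c j ^ 2 / 2) :=
        Finset.prod_le_prod (fun j _ => (Real.cosh_pos _).le)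
          (fun j _ => Real.cosh_le_exp_half_sq _)
      have h2 : ∏ j ∈ Finset.range n, Real.exp (c j ^ 2 / 2)
          = Real.exp (∑ j ∈ Finset.range n, c j ^ 2 / 2) := by
        rw [Real.exp_sum]
      have h3 : ∑ j ∈ Finset.range n, c j ^ 2 / 2 = lam^2 / 2 := by
        have : ∑ j ∈ Finset.range n, c j ^ 2 / 2
            = (t^2/2) * ∑ j ∈ Finset.range n, (a (j+1))^2 := by
          rw [Finset.mul_sum]
          exact Finset.sum_congr rfl fun j _ => by rw [hc j]; ring
        rw [this, ← sum_Icc_one n (fun j => (a j)^2), ← hσ2]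
        have ht2 : t^2 * σ2 = lam^2 := by
          rw [ht, div_pow, hσsq]
          field_simp
        nlinarith [ht2]
      calc Real.exp (-lam^2) * ∏ j ∈ Finset.range n, Real.cosh (c j)
          ≤ Real.exp (-lam^2) * Real.exp (lam^2/2) := by
            rw [← h3, ← h2]
            exact mul_le_mul_of_nonneg_left h1 (Real.exp_pos _).le
        _ = Real.exp (-lam^2/2) := by rw [← Real.exp_add]; ring_nf
    calc volume {x ∈ Set.Icc (0:ℝ) 1 | lam * σ < |S x|}
        ≤ volume ({x ∈ Set.Icc (0:ℝ) 1 |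
              lam^2 < ∑ j ∈ Finset.range n, (t * a (j+1)) * rademacher (j+1) x}
            ∪ {x ∈ Set.Icc (0:ℝ) 1 |
              lam^2 < ∑ j ∈ Finset.range n, (-(t * a (j+1))) * rademacher (j+1) x}) :=
          measure_mono hsubset
      _ ≤ volume {x ∈ Set.Icc (0:ℝ) 1 |
              lam^2 < ∑ j ∈ Finset.range n, (t * a (j+1)) * rademacher (j+1) x}
          + volume {x ∈ Set.Icc (0:ℝ) 1 |
              lam^2 < ∑ j ∈ Finset.range n, (-(t * a (j+1))) * rademacher (j+1) x} :=
          measure_union_le _ _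
      _ ≤ ENNReal.ofReal (Real.exp (-lam^2/2)) + ENNReal.ofReal (Real.exp (-lam^2/2)) := by
          gcongr
          · exact (radm_chernoff n (fun j => t * a (j+1)) (lam^2)).trans
              (ENNReal.ofReal_le_ofReal (hprodbound _ fun j => rfl))
          · exact (radm_chernoff n (fun j => -(t * a (j+1))) (lam^2)).trans
              (ENNReal.ofReal_le_ofReal (hprodbound _ fun j => by rw [neg_pow]; ring))
      _ = ENNReal.ofReal (2 * Real.exp (-lam^2/2)) := by
          rw [← ENNReal.ofReal_add (Real.exp_pos _).le (Real.exp_pos _).le]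
          ring_nf
end

section
/- There is an absolute constant c_1 > 0 such that for all n ≥ 1 and all real numbers a_1,...,a_n, ∫_0^1 |Σ_{j=1}^n a_j r_j(x)| dx ≥ c_1 (Σ_{j=1}^n a_j²)^{1/2}, where r_j is the j-th Rademacher function. -/
open Real MeasureTheory

namespace KhLower

noncomputable def ee (d k : ℕ) : ℝ := (-1 : ℝ) ^ (k / 2 ^ d)

lemma ee_zero (k c : ℕ) : ee 0 (2 * k + c) = (-1 : ℝ) ^ c := by
  unfold ee
  rw [pow_zero, Nat.div_one, pow_add, pow_mul]
  simp

lemma ee_succ (d k c : ℕ) (hc : c < 2) : ee (d+1) (2*k+c) = ee d k := by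
  unfold ee
  congr 1
  rw [pow_succ', ← Nat.div_div_eq_div_mul, Nat.mul_add_div (by norm_num),
    Nat.div_eq_of_lt hc, Nat.add_zero]

noncomputable def V (n : ℕ) (b : ℕ → ℝ) (k : ℕ) : ℝ := ∑ d ∈ Finset.range n, b d * ee d k

lemma V_rec (n : ℕ) (b : ℕ → ℝ) (k c : ℕ) (hc : c < 2) :
    V (n+1) b (2*k+c) = (-1:ℝ)^c * b 0 + V n (fun d => b (d+1)) k := by
  unfold V
  rw [Finset.sum_range_succ']
  simp only [ee_succ _ _ _ hc, ee_zero]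
  ring

lemma sum_range_two_mul (m : ℕ) (f : ℕ → ℝ) :
    ∑ k ∈ Finset.range (2*m), f k = ∑ k ∈ Finset.range m, (f (2*k) + f (2*k+1)) := by
  induction m with
  | zero => simp
  | succ m ih =>
    have h : 2*(m+1) = (2*m) + 1 + 1 := by ring
    rw [h, Finset.sum_range_succ, Finset.sum_range_succ, ih, Finset.sum_range_succ]
    ring

lemma sum_V_sq (n : ℕ) : ∀ b : ℕ → ℝ,
    ∑ k ∈ Finset.range (2^n), (V n b k)^2 = 2^n * ∑ d ∈ Finset.range n, (b d)^2 := by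
  induction n with
  | zero => intro b; simp [V]
  | succ n ih =>
    intro b
    have h2 : (2:ℕ)^(n+1) = 2 * 2^n := by ring
    rw [h2, sum_range_two_mul]
    have e0 : ∀ k : ℕ, V (n+1) b (2*k) = b 0 + V n (fun d => b (d+1)) k := by
      intro k
      have := V_rec n b k 0 (by norm_num)
      simpa using this
    have e1 : ∀ k : ℕ, V (n+1) b (2*k+1) = -(b 0) + V n (fun d => b (d+1)) k := by
      intro k
      have := V_rec n b k 1 (by norm_num)
      simpa using this
    calc ∑ k ∈ Finset.range (2^n), ((V (n+1) b (2*k))^2 + (V (n+1) b (2*k+1))^2)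
        = ∑ k ∈ Finset.range (2^n),
            (2 * (V n (fun d => b (d+1)) k)^2 + 2 * (b 0)^2) := by
          refine Finset.sum_congr rfl fun k _ => ?_
          rw [e0 k, e1 k]; ring
      _ = 2 * (2^n * ∑ d ∈ Finset.range n, (b (d+1))^2) + 2^n * (2 * (b 0)^2) := by
          rw [Finset.sum_add_distrib, ← Finset.mul_sum, ih, Finset.sum_const,
            Finset.card_range, nsmul_eq_mul]
          push_cast
          ring
      _ = 2^(n+1) * ∑ d ∈ Finset.range (n+1), (b d)^2 := by
          rw [Finset.sum_range_succ']
          push_cast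
          ring

lemma sum_V_pow4 (n : ℕ) : ∀ b : ℕ → ℝ,
    ∑ k ∈ Finset.range (2^n), (V n b k)^4 ≤ 3 * 2^n * (∑ d ∈ Finset.range n, (b d)^2)^2 := by
  induction n with
  | zero => intro b; simp [V]
  | succ n ih =>
    intro b
    have h2 : (2:ℕ)^(n+1) = 2 * 2^n := by ring
    rw [h2, sum_range_two_mul]
    have e0 : ∀ k : ℕ, V (n+1) b (2*k) = b 0 + V n (fun d => b (d+1)) k := by
      intro k; have := V_rec n b k 0 (by norm_num); simpa using this
    have e1 : ∀ k : ℕ, V (n+1) b (2*k+1) = -(b 0) + V n (fun d => b (d+1)) k := by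
      intro k; have := V_rec n b k 1 (by norm_num); simpa using this
    have hA : (0:ℝ) ≤ ∑ d ∈ Finset.range n, (b (d+1))^2 :=
      Finset.sum_nonneg fun _ _ => sq_nonneg _
    have hP : (0:ℝ) < 2^n := by positivity
    calc ∑ k ∈ Finset.range (2^n), ((V (n+1) b (2*k))^4 + (V (n+1) b (2*k+1))^4)
        = ∑ k ∈ Finset.range (2^n),
            (2 * (V n (fun d => b (d+1)) k)^4
              + 12 * (b 0)^2 * (V n (fun d => b (d+1)) k)^2 + 2 * (b 0)^4) := by
          refine Finset.sum_congr rfl fun k _ => ?_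
          rw [e0 k, e1 k]; ring
      _ = 2 * (∑ k ∈ Finset.range (2^n), (V n (fun d => b (d+1)) k)^4)
            + 12 * (b 0)^2 * (∑ k ∈ Finset.range (2^n), (V n (fun d => b (d+1)) k)^2)
            + 2^n * (2 * (b 0)^4) := by
          rw [Finset.sum_add_distrib, Finset.sum_add_distrib, ← Finset.mul_sum,
            ← Finset.mul_sum, Finset.sum_const, Finset.card_range, nsmul_eq_mul]
          push_cast
          ring
      _ ≤ 2 * (3 * 2^n * (∑ d ∈ Finset.range n, (b (d+1))^2)^2)
            + 12 * (b 0)^2 * (2^n * ∑ d ∈ Finset.range n, (b (d+1))^2)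
            + 2^n * (2 * (b 0)^4) := by
          rw [sum_V_sq n (fun d => b (d+1))]
          have := ih (fun d => b (d+1))
          nlinarith [sq_nonneg (b 0)]
      _ ≤ 3 * 2^(n+1) * (∑ d ∈ Finset.range (n+1), (b d)^2)^2 := by
          rw [Finset.sum_range_succ', show (2:ℝ)^(n+1) = 2*2^n by ring]
          nlinarith [mul_nonneg hP.le (by positivity : (0:ℝ) ≤ (b 0)^4), hA, hP]

lemma sum_abs_V (n : ℕ) (b : ℕ → ℝ) :
    2^n * Real.sqrt ((∑ d ∈ Finset.range n, (b d)^2) / 3)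
      ≤ ∑ k ∈ Finset.range (2^n), |V n b k| := by
  set c := ∑ d ∈ Finset.range n, (b d)^2 with hc
  have hc0 : 0 ≤ c := Finset.sum_nonneg fun _ _ => sq_nonneg _
  set Q1 := ∑ k ∈ Finset.range (2^n), |V n b k| with hQ1
  have hQ1n : 0 ≤ Q1 := Finset.sum_nonneg fun _ _ => abs_nonneg _
  set Q3 := ∑ k ∈ Finset.range (2^n), |V n b k|^3 with hQ3
  have hQ3n : 0 ≤ Q3 := Finset.sum_nonneg fun _ _ => by positivity
  have hQ2 : ∑ k ∈ Finset.range (2^n), (V n b k)^2 = 2^n * c := sum_V_sq n b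
  have hQ4 : ∑ k ∈ Finset.range (2^n), (V n b k)^4 ≤ 3 * 2^n * c^2 := sum_V_pow4 n b
  have hQ4n : 0 ≤ ∑ k ∈ Finset.range (2^n), (V n b k)^4 :=
    Finset.sum_nonneg fun _ _ => by positivity
  have hP : (0:ℝ) < 2^n := by positivity
  have cs1 : (2^n * c)^2 ≤ Q1 * Q3 := by
    rw [← hQ2]
    have h := Finset.sum_mul_sq_le_sq_mul_sq (Finset.range (2^n))
      (fun k => Real.sqrt |V n b k|) (fun k => Real.sqrt |V n b k| * |V n b k|)
    have h1 : ∀ k : ℕ, Real.sqrt |V n b k| * (Real.sqrt |V n b k| * |V n b k|)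
        = (V n b k)^2 := by
      intro k
      rw [← mul_assoc, Real.mul_self_sqrt (abs_nonneg _), abs_mul_abs_self, ← sq]
    have h2 : ∀ k : ℕ, (Real.sqrt |V n b k|)^2 = |V n b k| :=
      fun k => Real.sq_sqrt (abs_nonneg _)
    have h3 : ∀ k : ℕ, (Real.sqrt |V n b k| * |V n b k|)^2 = |V n b k|^3 := by
      intro k; rw [mul_pow, h2]; ring
    calc (∑ k ∈ Finset.range (2^n), (V n b k)^2)^2
        = (∑ k ∈ Finset.range (2^n),
            Real.sqrt |V n b k| * (Real.sqrt |V n b k| * |V n b k|))^2 := by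
          rw [Finset.sum_congr rfl fun k _ => h1 k]
      _ ≤ (∑ k ∈ Finset.range (2^n), (Real.sqrt |V n b k|)^2)
            * ∑ k ∈ Finset.range (2^n), (Real.sqrt |V n b k| * |V n b k|)^2 := h
      _ = Q1 * Q3 := by
          rw [Finset.sum_congr rfl fun k _ => h2 k, Finset.sum_congr rfl fun k _ => h3 k]
  have cs2 : Q3^2 ≤ (2^n * c) * (3 * 2^n * c^2) := by
    have h := Finset.sum_mul_sq_le_sq_mul_sq (Finset.range (2^n))
      (fun k => |V n b k|) (fun k => (V n b k)^2)
    have h1 : ∀ k : ℕ, |V n b k| * (V n b k)^2 = |V n b k|^3 := by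
      intro k; rw [← sq_abs (V n b k)]; ring
    have h2 : ∀ k : ℕ, (|V n b k|)^2 = (V n b k)^2 := fun k => sq_abs _
    calc Q3^2 = (∑ k ∈ Finset.range (2^n), |V n b k| * (V n b k)^2)^2 := by
          rw [hQ3, Finset.sum_congr rfl fun k _ => (h1 k).symm]
      _ ≤ (∑ k ∈ Finset.range (2^n), |V n b k|^2)
            * ∑ k ∈ Finset.range (2^n), ((V n b k)^2)^2 := h
      _ ≤ (2^n * c) * (3 * 2^n * c^2) := by
          rw [Finset.sum_congr rfl fun k _ => h2 k, hQ2]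
          have : ∑ k ∈ Finset.range (2^n), ((V n b k)^2)^2
              = ∑ k ∈ Finset.range (2^n), (V n b k)^4 := by
            refine Finset.sum_congr rfl fun k _ => by ring
          rw [this]
          exact mul_le_mul_of_nonneg_left hQ4 (by positivity)
  rcases eq_or_lt_of_le hc0 with hc0' | hcpos
  · rw [← hc0']
    simp [hQ1n]
  · have key : (2^n)^2 * (c/3) ≤ Q1^2 := by
      have hmul : ((2^n * c)^2)^2 ≤ (Q1 * Q3) * (Q1 * Q3) := by
        calc ((2^n * c)^2)^2 = (2^n * c)^2 * (2^n * c)^2 := by ring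
          _ ≤ (Q1 * Q3) * (Q1 * Q3) :=
            mul_le_mul cs1 cs1 (sq_nonneg _) (le_trans (sq_nonneg _) cs1)
      have hmul2 : (Q1 * Q3) * (Q1 * Q3) ≤ Q1^2 * ((2^n * c) * (3 * 2^n * c^2)) := by
        have : (Q1 * Q3) * (Q1 * Q3) = Q1^2 * Q3^2 := by ring
        rw [this]
        exact mul_le_mul_of_nonneg_left cs2 (sq_nonneg _)
      nlinarith [mul_pos (mul_pos hP hP) (mul_pos (mul_pos hcpos hcpos) hcpos),
        sq_nonneg Q1]
    have : Real.sqrt ((2^n)^2 * (c/3)) ≤ Real.sqrt (Q1^2) := Real.sqrt_le_sqrt key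
    rw [Real.sqrt_sq hQ1n, Real.sqrt_mul (sq_nonneg _), Real.sqrt_sq hP.le] at this
    exact this

lemma sign_sin_pi_mul (y : ℝ) (h0 : 0 < y) (hlt : (⌊y⌋₊ : ℝ) < y) :
    Real.sign (Real.sin (π * y)) = (-1:ℝ)^(⌊y⌋₊) := by
  set k := ⌊y⌋₊ with hk
  have hk2 : y < k + 1 := Nat.lt_floor_add_one y
  have hs : Real.sin (π*y) = (-1:ℝ)^(k:ℕ) * Real.sin (π*(y-k)) := by
    have h := Real.sin_add_int_mul_pi (π*(y-(k:ℕ))) (k:ℕ)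
    rw [zpow_natCast] at h
    rw [← h]
    congr 1
    push_cast
    ring
  have hpos : 0 < Real.sin (π*(y-k)) := by
    apply Real.sin_pos_of_pos_of_lt_pi
    · have : 0 < y - k := by linarith
      positivity
    · have h1 : y - k < 1 := by linarith
      calc π * (y - k) < π * 1 := by
            exact mul_lt_mul_of_pos_left h1 Real.pi_pos
        _ = π := mul_one π
  rcases Nat.even_or_odd k with he | ho
  · rw [hs, he.neg_one_pow, one_mul, Real.sign_of_pos hpos]
  · rw [hs, ho.neg_one_pow]
    rw [Real.sign_of_neg (by linarith)]

lemma rademacher_eq_ee (n j k : ℕ) (hj : j ≤ n) (x : ℝ)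
    (hx : (k:ℝ)/2^n < x) (hx2 : x < ((k:ℝ)+1)/2^n) :
    rademacher j x = ee (n-j) k := by
  have hP : (0:ℝ) < 2^n := by positivity
  have hxpos : 0 < x := lt_of_le_of_lt (by positivity) hx
  have hgt : (k:ℝ) < 2^n * x := by
    rw [div_lt_iff₀ hP] at hx; linarith [hx]
  have hltk : 2^n * x < (k:ℝ) + 1 := by
    rw [lt_div_iff₀ hP] at hx2; linarith [hx2]
  have hfn : ⌊(2:ℝ)^n * x⌋₊ = k := by
    rw [Nat.floor_eq_iff (by positivity)]
    exact ⟨hgt.le, hltk⟩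
  have hpowsplit : (2:ℝ)^(n-j) * 2^j = 2^n := by
    rw [← pow_add, Nat.sub_add_cancel hj]
  have hyx : (2:ℝ)^j * x = (2^n * x) / ((2^(n-j) : ℕ) : ℝ) := by
    push_cast
    rw [eq_div_iff (by positivity)]
    linear_combination x * hpowsplit
  have hfloor : ⌊(2:ℝ)^j * x⌋₊ = k / 2^(n-j) := by
    rw [hyx, Nat.floor_div_natCast, hfn]
  have hypos : 0 < (2:ℝ)^j * x := by positivity
  have hstrict : (⌊(2:ℝ)^j * x⌋₊ : ℝ) < 2^j * x := by
    rw [hfloor]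
    have h1 : ((k / 2^(n-j) : ℕ) : ℝ) ≤ (k:ℝ) / ((2^(n-j):ℕ):ℝ) := Nat.cast_div_le
    have h2 : (k:ℝ) / ((2^(n-j):ℕ):ℝ) < 2^j * x := by
      push_cast
      rw [div_lt_iff₀ (by positivity)]
      calc (k:ℝ) < 2^n * x := hgt
        _ = 2^j * x * 2^(n-j) := by rw [← hpowsplit]; ring
    exact lt_of_le_of_lt h1 h2
  have := sign_sin_pi_mul ((2:ℝ)^j * x) hypos hstrict
  rw [hfloor] at this
  unfold rademacher ee
  rw [show (2:ℝ)^j * π * x = π * (2^j * x) by ring]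
  exact this

lemma integral_abs_sum (n : ℕ) (a : ℕ → ℝ) :
    ∫ x in (0:ℝ)..1, |∑ j ∈ Finset.Icc 1 n, a j * rademacher j x|
      = (∑ k ∈ Finset.range (2^n), |V n (fun d => a (n-d)) k|) * (1/2^n) := by
  set b : ℕ → ℝ := fun d => a (n - d) with hb
  set aK : ℕ → ℝ := fun k => (k:ℝ)/2^n with haK
  have hP : (0:ℝ) < 2^n := by positivity
  have hSval : ∀ k : ℕ, ∀ x ∈ Set.Ioo (aK k) (aK (k+1)),
      ∑ j ∈ Finset.Icc 1 n, a j * rademacher j x = V n b k := by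
    intro k x hx
    have hx1 : (k:ℝ)/2^n < x := hx.1
    have hx2 : x < ((k:ℝ)+1)/2^n := by
      have := hx.2
      simp only [haK] at this
      push_cast at this
      exact this
    have hterm : ∀ j ∈ Finset.Icc 1 n, a j * rademacher j x = a j * ee (n-j) k := by
      intro j hj
      rw [rademacher_eq_ee n j k (Finset.mem_Icc.mp hj).2 x hx1 hx2]
    rw [Finset.sum_congr rfl hterm]
    unfold V
    refine Finset.sum_nbij' (fun j => n - j) (fun d => n - d) ?_ ?_ ?_ ?_ ?_
    · intro j hj
      rw [Finset.mem_Icc] at hj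
      rw [Finset.mem_range]
      try simp only []
      omega
    · intro d hd
      rw [Finset.mem_range] at hd
      rw [Finset.mem_Icc]
      try simp only []
      omega
    · intro j hj
      rw [Finset.mem_Icc] at hj
      try simp only []
      omega
    · intro d hd
      rw [Finset.mem_range] at hd
      try simp only []
      omega
    · intro j hj
      rw [Finset.mem_Icc] at hj
      rw [hb]
      simp only []
      congr 2
      try simp only []
      omega
  have hle : ∀ k : ℕ, aK k ≤ aK (k+1) := by
    intro k
    simp only [haK]
    have hnum : ((k:ℝ)) ≤ ((k+1:ℕ):ℝ) := by push_cast; linarith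
    exact (div_le_div_iff_of_pos_right hP).mpr hnum
  have hae : ∀ k : ℕ,
      (fun x => |∑ j ∈ Finset.Icc 1 n, a j * rademacher j x|)
        =ᵐ[volume.restrict (Set.Ioc (aK k) (aK (k+1)))] (fun _ => |V n b k|) := by
    intro k
    have hmem : ∀ᵐ x ∂volume.restrict (Set.Ioc (aK k) (aK (k+1))),
        x ∈ Set.Ioc (aK k) (aK (k+1)) := ae_restrict_mem measurableSet_Ioc
    have hne : ∀ᵐ x : ℝ ∂volume.restrict (Set.Ioc (aK k) (aK (k+1))), x ≠ aK (k+1) := by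
      refine ae_restrict_of_ae ?_
      rw [ae_iff]
      simp only [not_not, Set.setOf_eq_eq_singleton]
      exact measure_singleton _
    filter_upwards [hmem, hne] with x h1 h2
    rw [hSval k x ⟨h1.1, lt_of_le_of_ne h1.2 h2⟩]
  have hint : ∀ k : ℕ, IntervalIntegrable
      (fun x => |∑ j ∈ Finset.Icc 1 n, a j * rademacher j x|) volume (aK k) (aK (k+1)) := by
    intro k
    rw [intervalIntegrable_iff_integrableOn_Ioc_of_le (hle k)]
    exact (integrableOn_const measure_Ioc_lt_top.ne).congr (hae k).symm
  have key : ∀ k : ℕ, (∫ x in aK k..aK (k+1), |∑ j ∈ Finset.Icc 1 n, a j * rademacher j x|)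
      = |V n b k| * (1/2^n) := by
    intro k
    rw [intervalIntegral.integral_of_le (hle k)]
    rw [MeasureTheory.integral_congr_ae (hae k)]
    rw [MeasureTheory.setIntegral_const, measureReal_def, Real.volume_Ioc, smul_eq_mul]
    rw [ENNReal.toReal_ofReal (by linarith [hle k])]
    have heq : aK (k+1) - aK k = 1/2^n := by
      simp only [haK]
      push_cast
      field_simp
      ring
    rw [heq]
    ring
  have total := intervalIntegral.sum_integral_adjacent_intervals (μ := volume)
    (a := aK) (n := 2^n)
    (f := fun x => |∑ j ∈ Finset.Icc 1 n, a j * rademacher j x|)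
    (fun k _ => hint k)
  have h0 : aK 0 = 0 := by simp [haK]
  have h1 : aK (2^n) = 1 := by
    simp only [haK]
    push_cast
    field_simp
  rw [h0, h1] at total
  rw [← total, Finset.sum_mul]
  exact Finset.sum_congr rfl fun k _ => key k

end KhLower

/-- Lower Khintchine inequality in L¹ for Rademacher sums. -/
theorem khintchine_lower : ∃ c : ℝ, 0 < c ∧ ∀ (n : ℕ), 1 ≤ n → ∀ a : ℕ → ℝ,
    c * Real.sqrt (∑ j ∈ Finset.Icc 1 n, (a j)^2) ≤
      ∫ x in (0:ℝ)..1, |∑ j ∈ Finset.Icc 1 n, a j * rademacher j x| := by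
  refine ⟨(Real.sqrt 3)⁻¹, by positivity, ?_⟩
  intro n hn a
  rw [KhLower.integral_abs_sum n a]
  have hsum : ∑ d ∈ Finset.range n, (a (n-d))^2 = ∑ j ∈ Finset.Icc 1 n, (a j)^2 := by
    refine Finset.sum_nbij' (fun d => n - d) (fun j => n - j) ?_ ?_ ?_ ?_ ?_
    · intro d hd
      rw [Finset.mem_range] at hd
      rw [Finset.mem_Icc]
      try simp only []
      omega
    · intro j hj
      rw [Finset.mem_Icc] at hj
      rw [Finset.mem_range]
      try simp only []
      omega
    · intro d hd
      rw [Finset.mem_range] at hd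
      try simp only []
      omega
    · intro j hj
      rw [Finset.mem_Icc] at hj
      try simp only []
      omega
    · intro d hd
      rfl
  have hb := KhLower.sum_abs_V n (fun d => a (n-d))
  have hVsum : ∑ d ∈ Finset.range n, (a (n-d))^2
      = ∑ d ∈ Finset.range n, ((fun d => a (n-d)) d)^2 := rfl
  rw [← hVsum, hsum] at hb
  have hc0 : (0:ℝ) ≤ ∑ j ∈ Finset.Icc 1 n, (a j)^2 :=
    Finset.sum_nonneg fun _ _ => sq_nonneg _
  have hP : (0:ℝ) < 2^n := by positivity
  calc (Real.sqrt 3)⁻¹ * Real.sqrt (∑ j ∈ Finset.Icc 1 n, (a j)^2)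
      = Real.sqrt ((∑ j ∈ Finset.Icc 1 n, (a j)^2) / 3) := by
        rw [Real.sqrt_div hc0]
        rw [div_eq_mul_inv, mul_comm]
    _ = (2^n * Real.sqrt ((∑ j ∈ Finset.Icc 1 n, (a j)^2) / 3)) * (1/2^n) := by
        field_simp
    _ ≤ (∑ k ∈ Finset.range (2^n), |KhLower.V n (fun d => a (n-d)) k|) * (1/2^n) := by
        apply mul_le_mul_of_nonneg_right hb
        positivity
end

section
/- There is an absolute constant c_2 > 0 such that for all n ≥ 1 and all real numbers a_1,...,a_n, ∫_0^1 max_{1 ≤ k ≤ n} |Σ_{j=1}^k a_j r_j(x)| dx ≤ c_2 (Σ_{j=1}^n a_j²)^{1/2}, where r_j is the j-th Rademacher function. -/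
open Real MeasureTheory

namespace RadMax

/-- The sign `(-1)^(bit (n-j) of i)`. -/
noncomputable def eps (n j i : ℕ) : ℝ := if Nat.testBit i (n - j) then -1 else 1

/-- Discrete partial sums. -/
noncomputable def S (n : ℕ) (a : ℕ → ℝ) (k i : ℕ) : ℝ :=
  ∑ j ∈ Finset.Icc 1 k, a j * eps n j i

/-- Discrete running maximum. -/
noncomputable def M (n : ℕ) (a : ℕ → ℝ) : ℕ → ℕ → ℝ
  | 0, _ => 0
  | (k+1), i => max (M n a k i) |S n a (k+1) i|

lemma eps_sq (n j i : ℕ) : eps n j i ^ 2 = 1 := by unfold eps; split <;> norm_num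

lemma S_zero (n : ℕ) (a : ℕ → ℝ) (i : ℕ) : S n a 0 i = 0 := by simp [S]

lemma S_succ (n : ℕ) (a : ℕ → ℝ) (k i : ℕ) :
    S n a (k+1) i = S n a k i + a (k+1) * eps n (k+1) i :=
  Finset.sum_Icc_succ_top (Nat.succ_le_succ (Nat.zero_le k)) _

lemma M_nonneg (n : ℕ) (a : ℕ → ℝ) : ∀ k i, 0 ≤ M n a k i
  | 0, _ => le_refl 0
  | (k+1), i => le_trans (M_nonneg n a k i) (le_max_left _ _)

lemma pathwise (n : ℕ) (a : ℕ → ℝ) (i : ℕ) : ∀ K,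
    M n a K i ^ 2 + 2 * ∑ k ∈ Finset.range K,
      (|S n a (k+1) i| - |S n a k i|) * M n a k i ≤ 2 * |S n a K i| * M n a K i
  | 0 => by simp [M, S_zero]
  | (K+1) => by
    have IH := pathwise n a i K
    rw [Finset.sum_range_succ]
    have hm' : M n a (K+1) i = max (M n a K i) |S n a (K+1) i| := rfl
    rcases le_total (|S n a (K+1) i|) (M n a K i) with h | h
    · rw [hm', max_eq_left h]
      linarith
    · rw [hm', max_eq_right h]
      nlinarith [sq_nonneg (|S n a (K+1) i| - M n a K i), M_nonneg n a K i,
        abs_nonneg (S n a K i)]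

lemma xor_lt {n i b : ℕ} (hi : i < 2^n) (hb : b < 2^n) : i ^^^ b < 2^n :=
  Nat.bitwise_lt_two_pow hi hb

lemma sum_pair (n b : ℕ) (hb : b < 2^n) (f : ℕ → ℝ) :
    ∑ i ∈ Finset.range (2^n), f i = ∑ i ∈ Finset.range (2^n), f (i ^^^ b) := by
  refine Finset.sum_nbij' (fun i => i ^^^ b) (fun i => i ^^^ b) ?_ ?_ ?_ ?_ ?_
  · intro a ha; exact Finset.mem_range.2 (xor_lt (Finset.mem_range.1 ha) hb)
  · intro a ha; exact Finset.mem_range.2 (xor_lt (Finset.mem_range.1 ha) hb)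
  · intro a _; exact Nat.xor_xor_cancel_right _ _
  · intro a _; exact Nat.xor_xor_cancel_right _ _
  · intro a _; rw [Nat.xor_xor_cancel_right]

lemma eps_xor_self {n k : ℕ} (hk : k ≤ n) (i : ℕ) :
    eps n k (i ^^^ 2^(n-k)) = - eps n k i := by
  unfold eps
  rw [Nat.testBit_xor, Nat.testBit_two_pow_self]
  cases Nat.testBit i (n-k) <;> simp

lemma eps_xor_ne {n j k : ℕ} (hjn : j ≤ n) (hkn : k ≤ n) (hjk : j ≠ k) (i : ℕ) :
    eps n j (i ^^^ 2^(n-k)) = eps n j i := by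
  unfold eps
  rw [Nat.testBit_xor, Nat.testBit_two_pow_of_ne (by omega : n-k ≠ n-j)]
  simp

lemma S_xor {n k m : ℕ} (hk : k ≤ n) (hm : m < k) (a : ℕ → ℝ) (i : ℕ) :
    S n a m (i ^^^ 2^(n-k)) = S n a m i := by
  refine Finset.sum_congr rfl fun j hj => ?_
  have hj' := Finset.mem_Icc.1 hj
  rw [eps_xor_ne (by omega) hk (by omega)]

lemma M_xor {n k : ℕ} (hk : k ≤ n) (a : ℕ → ℝ) (i : ℕ) :
    ∀ m, m < k → M n a m (i ^^^ 2^(n-k)) = M n a m i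
  | 0, _ => rfl
  | (m+1), h => by
    show max _ _ = max _ _
    rw [M_xor hk a i m (by omega), S_xor hk h a i]

lemma sum_mul_eps_eq_zero {n k : ℕ} (hk1 : 1 ≤ k) (hk : k ≤ n) (g : ℕ → ℝ)
    (hg : ∀ i, g (i ^^^ 2^(n-k)) = g i) :
    ∑ i ∈ Finset.range (2^n), g i * eps n k i = 0 := by
  have hb : 2^(n-k) < 2^n := Nat.pow_lt_pow_right one_lt_two (by omega)
  have h := sum_pair n _ hb (fun i => g i * eps n k i)
  have h2 : ∀ i ∈ Finset.range (2^n),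
      g (i ^^^ 2^(n-k)) * eps n k (i ^^^ 2^(n-k)) = -(g i * eps n k i) := by
    intro i _
    rw [hg, eps_xor_self hk]
    ring
  rw [Finset.sum_congr rfl h2, Finset.sum_neg_distrib] at h
  linarith

lemma sum_sq (n : ℕ) (a : ℕ → ℝ) : ∀ K, K ≤ n →
    ∑ i ∈ Finset.range (2^n), (S n a K i)^2 = 2^n * ∑ j ∈ Finset.Icc 1 K, (a j)^2
  | 0, _ => by simp [S_zero]
  | (K+1), hK => by
    have IH := sum_sq n a K (by omega)
    have he : ∀ i ∈ Finset.range (2^n), (S n a (K+1) i)^2 =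
        (S n a K i)^2 + (a (K+1))^2 * (eps n (K+1) i)^2
          + 2 * a (K+1) * (S n a K i * eps n (K+1) i) := by
      intro i _; rw [S_succ]; ring
    rw [Finset.sum_congr rfl he, Finset.sum_add_distrib, Finset.sum_add_distrib]
    have h0 : ∑ i ∈ Finset.range (2^n), 2 * a (K+1) * (S n a K i * eps n (K+1) i)
        = 0 := by
      rw [← Finset.mul_sum,
        sum_mul_eps_eq_zero (Nat.succ_le_succ (Nat.zero_le K)) hK
          (fun i => S n a K i) (fun i => S_xor hK (Nat.lt_succ_self K) a i), mul_zero]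
    have h1 : ∑ i ∈ Finset.range (2^n), (a (K+1))^2 * (eps n (K+1) i)^2
        = 2^n * (a (K+1))^2 := by
      rw [Finset.sum_congr rfl (fun i _ => by rw [eps_sq])]
      simp [Finset.sum_const, Finset.card_range, mul_comm]
    rw [h0, h1, IH, Finset.sum_Icc_succ_top (Nat.succ_le_succ (Nat.zero_le K))]
    ring

lemma corr_nonneg {n k : ℕ} (hk : k + 1 ≤ n) (a : ℕ → ℝ) :
    0 ≤ ∑ i ∈ Finset.range (2^n), (|S n a (k+1) i| - |S n a k i|) * M n a k i := by
  have hb : 2^(n-(k+1)) < 2^n := Nat.pow_lt_pow_right one_lt_two (by omega)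
  set f : ℕ → ℝ := fun i => (|S n a (k+1) i| - |S n a k i|) * M n a k i with hf
  have h := sum_pair n _ hb f
  have h2 : (2:ℝ) * ∑ i ∈ Finset.range (2^n), f i
      = ∑ i ∈ Finset.range (2^n), (f i + f (i ^^^ 2^(n-(k+1)))) := by
    rw [Finset.sum_add_distrib, ← h]; ring
  have h3 : ∀ i ∈ Finset.range (2^n), 0 ≤ f i + f (i ^^^ 2^(n-(k+1))) := by
    intro i _
    have hS : S n a k (i ^^^ 2^(n-(k+1))) = S n a k i :=
      S_xor hk (Nat.lt_succ_self k) a i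
    have hM : M n a k (i ^^^ 2^(n-(k+1))) = M n a k i :=
      M_xor hk a i k (Nat.lt_succ_self k)
    have hS1 : S n a (k+1) i = S n a k i + a (k+1) * eps n (k+1) i := S_succ n a k i
    have hS2 : S n a (k+1) (i ^^^ 2^(n-(k+1)))
        = S n a k i - a (k+1) * eps n (k+1) i := by
      rw [S_succ, hS, eps_xor_self hk]; ring
    have habs : 2 * |S n a k i| ≤ |S n a (k+1) i| + |S n a (k+1) (i ^^^ 2^(n-(k+1)))| := by
      rw [hS1, hS2]
      calc 2 * |S n a k i| = |(S n a k i + a (k+1) * eps n (k+1) i)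
            + (S n a k i - a (k+1) * eps n (k+1) i)| := by
              rw [show (S n a k i + a (k+1) * eps n (k+1) i)
                + (S n a k i - a (k+1) * eps n (k+1) i) = 2 * S n a k i by ring, abs_mul]
              simp
        _ ≤ _ := abs_add_le _ _
    have hMn := M_nonneg n a k i
    rw [hf]
    simp only []
    rw [hS, hM]
    nlinarith
  rw [show (0:ℝ) = 2⁻¹ * 0 by ring]
  have := Finset.sum_nonneg h3
  nlinarith [this, h2]

lemma sum_M_le (n : ℕ) (hn : 1 ≤ n) (a : ℕ → ℝ) :
    ∑ i ∈ Finset.range (2^n), M n a n i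
      ≤ 2^n * (2 * Real.sqrt (∑ j ∈ Finset.Icc 1 n, (a j)^2)) := by
  set A := ∑ j ∈ Finset.Icc 1 n, (a j)^2 with hA
  have hA0 : 0 ≤ A := Finset.sum_nonneg fun j _ => sq_nonneg _
  set X := ∑ i ∈ Finset.range (2^n), (M n a n i)^2 with hX
  have hX0 : 0 ≤ X := Finset.sum_nonneg fun i _ => sq_nonneg _
  set Y := ∑ i ∈ Finset.range (2^n), |S n a n i| * M n a n i with hY
  have hY0 : 0 ≤ Y := Finset.sum_nonneg fun i _ =>
    mul_nonneg (abs_nonneg _) (M_nonneg n a n i)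
  have step1 : X ≤ 2 * Y := by
    have hsum := Finset.sum_le_sum (fun i (_ : i ∈ Finset.range (2^n)) => pathwise n a i n)
    rw [Finset.sum_add_distrib] at hsum
    have hcorr : 0 ≤ ∑ i ∈ Finset.range (2^n), 2 * ∑ k ∈ Finset.range n,
        (|S n a (k+1) i| - |S n a k i|) * M n a k i := by
      have heq : ∑ i ∈ Finset.range (2^n), 2 * ∑ k ∈ Finset.range n,
          (|S n a (k+1) i| - |S n a k i|) * M n a k i
          = 2 * ∑ k ∈ Finset.range n, ∑ i ∈ Finset.range (2^n),
          (|S n a (k+1) i| - |S n a k i|) * M n a k i := by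
        rw [← Finset.mul_sum, Finset.sum_comm]
      rw [heq]
      have := Finset.sum_nonneg (fun k (hk : k ∈ Finset.range n) =>
        corr_nonneg (Nat.succ_le_of_lt (Finset.mem_range.1 hk)) a)
      linarith
    have h2Y : ∑ i ∈ Finset.range (2^n), 2 * |S n a n i| * M n a n i = 2 * Y := by
      rw [hY, Finset.mul_sum]; exact Finset.sum_congr rfl fun i _ => by ring
    rw [h2Y] at hsum
    linarith
  have step2 : Y^2 ≤ (2^n * A) * X := by
    have hcs := Finset.sum_mul_sq_le_sq_mul_sq (Finset.range (2^n))
      (fun i => |S n a n i|) (fun i => M n a n i)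
    have hs : ∑ i ∈ Finset.range (2^n), |S n a n i|^2 = 2^n * A := by
      rw [hA, ← sum_sq n a n le_rfl]
      exact Finset.sum_congr rfl fun i _ => sq_abs _
    rw [hs] at hcs
    exact hcs
  have hB0 : (0:ℝ) ≤ 2^n * A := by positivity
  have step3 : X ≤ 4 * (2^n * A) := by
    nlinarith [mul_le_mul_of_nonneg_left step1 hX0,
      mul_le_mul_of_nonneg_left step1 (by linarith : (0:ℝ) ≤ 2*Y), step2, hX0, hB0]
  set T := ∑ i ∈ Finset.range (2^n), M n a n i with hT
  have hT0 : 0 ≤ T := Finset.sum_nonneg fun i _ => M_nonneg n a n i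
  have step4 : T^2 ≤ 2^n * X := by
    have hcs := Finset.sum_mul_sq_le_sq_mul_sq (Finset.range (2^n))
      (fun i => M n a n i) (fun _ => (1:ℝ))
    simp only [mul_one, one_pow, Finset.sum_const, Finset.card_range, nsmul_eq_mul] at hcs
    push_cast at hcs
    calc T^2 ≤ X * 2^n := hcs
      _ = 2^n * X := by ring
  have hfin : T^2 ≤ (2^n * (2 * Real.sqrt A))^2 := by
    have hsq : Real.sqrt A ^ 2 = A := Real.sq_sqrt hA0
    have h2n : (0:ℝ) ≤ (2:ℝ)^n := by positivity
    calc T^2 ≤ 2^n * X := step4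
      _ ≤ 2^n * (4 * (2^n * A)) := by
          have := mul_le_mul_of_nonneg_left step3 h2n
          linarith
      _ = (2^n * (2 * Real.sqrt A))^2 := by rw [mul_pow, mul_pow]; rw [hsq]; ring
  have := Real.sqrt_le_sqrt hfin
  rwa [Real.sqrt_sq hT0, Real.sqrt_sq (by positivity)] at this

lemma rademacher_eq {n j i : ℕ} (hjn : j ≤ n) {x : ℝ}
    (hx1 : (i:ℝ)/2^n < x) (hx2 : x < ((i:ℝ)+1)/2^n) :
    rademacher j x = eps n j i := by
  set q := i / 2^(n-j) with hq
  have hMpos : 0 < 2^(n-j) := Nat.pow_pos (by norm_num)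
  have hpow : (2:ℝ)^j * 2^(n-j) = 2^n := by
    rw [← pow_add]; congr 1; omega
  have h2j : (0:ℝ) < 2^j := by positivity
  have h2M : (0:ℝ) < 2^(n-j) := by positivity
  have h2n : (0:ℝ) < 2^n := by positivity
  have hq_le : ((q:ℝ)) * 2^(n-j) ≤ i := by
    exact_mod_cast Nat.div_mul_le_self i (2^(n-j))
  have hlt_nat : i < (q+1) * 2^(n-j) := (Nat.div_lt_iff_lt_mul hMpos).1 (Nat.lt_succ_self q)
  have hi_lt : (i:ℝ) + 1 ≤ ((q:ℝ)+1) * 2^(n-j) := by exact_mod_cast hlt_nat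
  have hy1 : (q:ℝ) < 2^j * x := by
    have e1 : (q:ℝ) * 2^n ≤ (i:ℝ) * 2^j := by
      calc (q:ℝ) * 2^n = ((q:ℝ) * 2^(n-j)) * 2^j := by rw [← hpow]; ring
        _ ≤ (i:ℝ) * 2^j := by nlinarith
    have := (div_lt_iff₀ h2n).1 hx1
    nlinarith
  have hy2 : 2^j * x < (q:ℝ) + 1 := by
    have := (lt_div_iff₀ h2n).1 hx2
    have e1 : ((i:ℝ)+1) * 2^j ≤ ((q:ℝ)+1) * 2^n := by
      calc ((i:ℝ)+1) * 2^j ≤ (((q:ℝ)+1) * 2^(n-j)) * 2^j := by nlinarith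
        _ = ((q:ℝ)+1) * 2^n := by rw [← hpow]; ring
    nlinarith
  have harg : (2:ℝ)^j * π * x = (2^j*x - q)*π + (q:ℤ)*π := by push_cast; ring
  have hsin : 0 < Real.sin ((2^j*x - (q:ℝ))*π) := by
    apply Real.sin_pos_of_pos_of_lt_pi
    · nlinarith [pi_pos]
    · nlinarith [pi_pos]
  rw [rademacher, harg, Real.sin_add_int_mul_pi]
  rcases Nat.even_or_odd q with h | h
  · have hpw : ((-1:ℝ))^(q:ℤ) = 1 := by
      rw [zpow_natCast]; exact h.neg_one_pow
    rw [hpw, one_mul, Real.sign_of_pos hsin]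
    have hb : Nat.testBit i (n-j) = false := by
      rw [Nat.testBit_eq_decide_div_mod_eq]
      simp [← hq, Nat.even_iff.mp h]
    simp [eps, hb]
  · have hpw : ((-1:ℝ))^(q:ℤ) = -1 := by
      rw [zpow_natCast]; exact h.neg_one_pow
    rw [hpw, neg_one_mul, Real.sign_of_neg (neg_neg_iff_pos.mpr hsin)]
    have hb : Nat.testBit i (n-j) = true := by
      rw [Nat.testBit_eq_decide_div_mod_eq]
      simp [← hq, Nat.odd_iff.mp h]
    simp [eps, hb]

lemma M_eq_sup (n : ℕ) (a : ℕ → ℝ) (i : ℕ) : ∀ K, (hK : 1 ≤ K) →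
    M n a K i = (Finset.Icc 1 K).sup' (Finset.nonempty_Icc.mpr hK)
      (fun k => |S n a k i|) := by
  intro K
  induction K with
  | zero => omega
  | succ m ih =>
    intro _
    rcases Nat.eq_zero_or_pos m with hm | hm
    · subst hm
      show max (M n a 0 i) _ = _
      rw [show M n a 0 i = 0 from rfl, max_eq_right (abs_nonneg _)]
      simp
    · have h1 : Finset.Icc 1 (m+1) = insert (m+1) (Finset.Icc 1 m) :=
        (Finset.insert_Icc_right_eq_Icc_add_one (by omega)).symm
      have h2 := ih hm
      show max (M n a m i) |S n a (m+1) i| = _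
      have h3 : (Finset.Icc 1 (m+1)).sup' (Finset.nonempty_Icc.mpr (by omega))
          (fun k => |S n a k i|)
          = |S n a (m+1) i| ⊔ (Finset.Icc 1 m).sup' (Finset.nonempty_Icc.mpr hm)
            (fun k => |S n a k i|) := by
        rw [Finset.sup'_congr (Finset.nonempty_Icc.mpr (by omega)) h1 (fun k _ => rfl)]
        exact Finset.sup'_insert _ _
      rw [h3, h2, max_comm]

end RadMax

/-- Maximal inequality in L¹ for partial sums of Rademacher sums. -/
theorem rademacher_maximal : ∃ c : ℝ, 0 < c ∧ ∀ (n : ℕ) (hn : 1 ≤ n) (a : ℕ → ℝ),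
    (∫ x in (0:ℝ)..1, (Finset.Icc 1 n).sup' (Finset.nonempty_Icc.mpr hn)
        (fun k => |∑ j ∈ Finset.Icc 1 k, a j * rademacher j x|)) ≤
      c * Real.sqrt (∑ j ∈ Finset.Icc 1 n, (a j)^2) := by
  refine ⟨2, by norm_num, fun n hn a => ?_⟩
  set G : ℝ → ℝ := fun x => (Finset.Icc 1 n).sup' (Finset.nonempty_Icc.mpr hn)
      (fun k => |∑ j ∈ Finset.Icc 1 k, a j * rademacher j x|) with hG
  set p : ℕ → ℝ := fun i => (i:ℝ)/2^n with hp
  have h2n : (0:ℝ) < 2^n := by positivity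
  -- on each open dyadic interval, G is constant
  have hGx : ∀ i : ℕ, ∀ x ∈ Set.Ioo (p i) (p (i+1)), G x = RadMax.M n a n i := by
    intro i x hx
    obtain ⟨hx1, hx2⟩ := hx
    have hx2' : x < ((i:ℝ)+1)/2^n := by
      rw [hp] at hx2; push_cast at hx2; exact hx2
    have hsum : ∀ k ∈ Finset.Icc 1 n,
        |∑ j ∈ Finset.Icc 1 k, a j * rademacher j x| = |RadMax.S n a k i| := by
      intro k hk
      have hk' := Finset.mem_Icc.1 hk
      congr 1
      refine Finset.sum_congr rfl fun j hj => ?_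
      have hj' := Finset.mem_Icc.1 hj
      rw [RadMax.rademacher_eq (by omega : j ≤ n) hx1 hx2']
    rw [hG]
    simp only []
    rw [Finset.sup'_congr (Finset.nonempty_Icc.mpr hn) rfl hsum]
    exact (RadMax.M_eq_sup n a i n hn).symm
  have hle : ∀ i : ℕ, p i ≤ p (i+1) := by
    intro i
    simp only [hp]
    gcongr
    push_cast
    linarith
  have hae : ∀ i : ℕ, ∀ᵐ x ∂(volume : Measure ℝ),
      x ∈ Set.uIoc (p i) (p (i+1)) → G x = RadMax.M n a n i := by
    intro i
    have hb : ∀ᵐ (x:ℝ) ∂(volume : Measure ℝ), x ≠ p (i+1) := by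
      rw [ae_iff]
      have hset : {x:ℝ | ¬ x ≠ p (i+1)} = {p (i+1)} := by ext y; simp
      rw [hset]
      exact measure_singleton _
    filter_upwards [hb] with x hxne hxmem
    rw [Set.uIoc_of_le (hle i)] at hxmem
    exact hGx i x ⟨hxmem.1, lt_of_le_of_ne hxmem.2 hxne⟩
  have hint : ∀ i : ℕ, IntervalIntegrable G volume (p i) (p (i+1)) := by
    intro i
    rw [intervalIntegrable_iff]
    have hc : IntegrableOn (fun _ => RadMax.M n a n i) (Set.uIoc (p i) (p (i+1))) volume := by
      apply (integrableOn_const_iff (by simp)).2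
      right
      exact measure_Ioc_lt_top
    exact hc.congr ((ae_restrict_iff' measurableSet_uIoc).2
      ((hae i).mono fun x h hx => (h hx).symm))
  have hval : ∀ i : ℕ, ∫ x in (p i)..(p (i+1)), G x = (2^n)⁻¹ * RadMax.M n a n i := by
    intro i
    rw [intervalIntegral.integral_congr_ae (hae i), intervalIntegral.integral_const]
    have hd : p (i+1) - p i = (2^n)⁻¹ := by
      simp only [hp]
      push_cast
      field_simp
      ring
    rw [hd, smul_eq_mul]
  have htot : ∫ x in (0:ℝ)..1, G x
      = ∑ i ∈ Finset.range (2^n), ∫ x in (p i)..(p (i+1)), G x := by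
    have hs := intervalIntegral.sum_integral_adjacent_intervals
      (μ := volume) (a := p) (fun k (_ : k < 2^n) => hint k)
    have hp0 : p 0 = 0 := by simp [hp]
    have hp1 : p (2^n) = 1 := by
      simp only [hp]
      push_cast
      field_simp
    rw [hp0, hp1] at hs
    exact hs.symm
  have hsum : ∑ i ∈ Finset.range (2^n), ∫ x in (p i)..(p (i+1)), G x
      = (2^n)⁻¹ * ∑ i ∈ Finset.range (2^n), RadMax.M n a n i := by
    rw [Finset.mul_sum]
    exact Finset.sum_congr rfl fun i _ => hval i
  calc ∫ x in (0:ℝ)..1, G x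
      = (2^n)⁻¹ * ∑ i ∈ Finset.range (2^n), RadMax.M n a n i := by rw [htot, hsum]
    _ ≤ (2^n)⁻¹ * (2^n * (2 * Real.sqrt (∑ j ∈ Finset.Icc 1 n, (a j)^2))) := by
        apply mul_le_mul_of_nonneg_left (RadMax.sum_M_le n hn a)
        positivity
    _ = 2 * Real.sqrt (∑ j ∈ Finset.Icc 1 n, (a j)^2) := by
        rw [← mul_assoc, inv_mul_cancel₀ (ne_of_gt h2n), one_mul]
end

section
/- Let (m_k) be a strictly increasing sequence of positive integers with m_1 = 1, and let Φ = (φ_k) be an orthonormal system on [0,1] with φ_1 ≡ 1, satisfying: (1) for all k ≥ 1 and 1 ≤ j ≤ m_k, φ_j is constant on each interval ((i-1)/m_k, i/m_k), i = 1,...,m_k; (2) for all k ≥ 2 and n > m_k, ∫_0^1 φ_n(x)² φ_j(x) dx = 0 for 2 ≤ j ≤ m_k; (3) sup_n ‖φ_n‖_∞ = M < ∞. Let (n_k) be positive integers with n_1 = 1 and m_{k-1} < n_k ≤ m_k for k ≥ 2. Let N ≥ l+1 and let p_k be linear combinations of φ_1,...,φ_{m_l} for k = l+1,...,N, and f(x)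 = Σ_{k=l+1}^N p_k(x) φ_{n_k}(x). Then ‖f‖_∞ ≥ (1/M) Σ_{k=l+1}^N ‖p_k‖_1. -/
open Real MeasureTheory

/-- L¹ norm of `f` on `(0,1)`. -/
noncomputable def l1Norm01 (f : ℝ → ℝ) : ℝ := ∫ x in (0:ℝ)..1, |f x|

/-- Essential supremum of `|f|` on `[0,1]`. -/
noncomputable def essSupNorm01 (f : ℝ → ℝ) : ℝ :=
  essSup (fun x => |f x|) (volume.restrict (Set.Icc (0:ℝ) 1))

noncomputable def muI : Measure ℝ := volume.restrict (Set.Ioc (0:ℝ) 1)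

/-- `g` is constant on each open interval of the `m`-grid. -/
def IsStepOn (m : ℕ) (g : ℝ → ℝ) : Prop :=
  ∀ i : ℕ, 1 ≤ i → i ≤ m → ∀ x ∈ Set.Ioo (((i:ℝ)-1)/m) ((i:ℝ)/m),
    ∀ y ∈ Set.Ioo (((i:ℝ)-1)/m) ((i:ℝ)/m), g x = g y

lemma IsStepOn.mul {m g h} (hg : IsStepOn m g) (hh : IsStepOn m h) :
    IsStepOn m (fun x => g x * h x) := fun i h1 h2 x hx y hy => by
  simp only [hg i h1 h2 x hx y hy, hh i h1 h2 x hx y hy]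

lemma IsStepOn.add {m g h} (hg : IsStepOn m g) (hh : IsStepOn m h) :
    IsStepOn m (fun x => g x + h x) := fun i h1 h2 x hx y hy => by
  simp only [hg i h1 h2 x hx y hy, hh i h1 h2 x hx y hy]

lemma IsStepOn.comp {m g} (hg : IsStepOn m g) (F : ℝ → ℝ) :
    IsStepOn m (fun x => F (g x)) := fun i h1 h2 x hx y hy => by
  simp only [hg i h1 h2 x hx y hy]

lemma IsStepOn.const (m : ℕ) (c : ℝ) : IsStepOn m (fun _ => c) := fun _ _ _ _ _ _ _ => rfl

lemma IsStepOn.sum {m : ℕ} {ι : Type*} (s : Finset ι) (f : ι → ℝ → ℝ)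
    (hf : ∀ j ∈ s, IsStepOn m (f j)) : IsStepOn m (fun x => ∑ j ∈ s, f j x) :=
  fun i h1 h2 x hx y hy =>
    Finset.sum_congr rfl fun j hj => hf j hj i h1 h2 x hx y hy

lemma IsStepOn.prod {m : ℕ} {ι : Type*} (s : Finset ι) (f : ι → ℝ → ℝ)
    (hf : ∀ j ∈ s, IsStepOn m (f j)) : IsStepOn m (fun x => ∏ j ∈ s, f j x) :=
  fun i h1 h2 x hx y hy =>
    Finset.prod_congr rfl fun j hj => hf j hj i h1 h2 x hx y hy

/-- the center of the `i`-th interval -/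
noncomputable def ctr (m i : ℕ) : ℝ := ((i:ℝ) - 2⁻¹)/m

lemma ctr_mem {m i : ℕ} (hm : 1 ≤ m) (h1 : 1 ≤ i) (h2 : i ≤ m) :
    ctr m i ∈ Set.Ioo (((i:ℝ)-1)/m) ((i:ℝ)/m) := by
  have hm0 : (0:ℝ) < m := by exact_mod_cast hm
  unfold ctr
  constructor
  · rw [div_lt_div_iff_of_pos_right hm0]; norm_num
  · rw [div_lt_div_iff_of_pos_right hm0]; norm_num

lemma ae_cover (m : ℕ) (hm : 1 ≤ m) :
    ∀ᵐ x ∂muI, ∃ i : ℕ, 1 ≤ i ∧ i ≤ m ∧ x ∈ Set.Ioo (((i:ℝ)-1)/m) ((i:ℝ)/m) := by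
  have hm0 : (0:ℝ) < m := by exact_mod_cast hm
  have key : {x | ¬ ∃ i : ℕ, 1 ≤ i ∧ i ≤ m ∧ x ∈ Set.Ioo (((i:ℝ)-1)/m) ((i:ℝ)/m)} ∩
      Set.Ioc (0:ℝ) 1 ⊆ (fun i : ℕ => (i:ℝ)/m) '' (Set.Icc 1 m) := by
    rintro x ⟨hnx, hx0, hx1⟩
    set i : ℕ := ⌈x * m⌉.toNat with hi
    have hxm0 : 0 < x * m := mul_pos hx0 hm0
    have hceil : 0 < ⌈x * m⌉ := Int.ceil_pos.mpr hxm0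
    have hi1 : 1 ≤ i := by omega
    have hceilm : ⌈x * m⌉ ≤ (m:ℤ) := Int.ceil_le.mpr (by push_cast; nlinarith)
    have him : i ≤ m := by omega
    have hic : (i:ℝ) = (⌈x * m⌉ : ℝ) := by exact_mod_cast congrArg (Int.cast : ℤ → ℝ) (Int.toNat_of_nonneg hceil.le)
    have hxle : x ≤ (i:ℝ)/m := by
      rw [le_div_iff₀ hm0, hic]; exact Int.le_ceil _
    have hlt : ((i:ℝ)-1)/m < x := by
      rw [div_lt_iff₀ hm0, hic]
      have := Int.ceil_lt_add_one (x * m)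
      linarith
    have hxe : x = (i:ℝ)/m := by
      rcases lt_or_eq_of_le hxle with h | h
      · exact absurd ⟨i, hi1, him, hlt, h⟩ hnx
      · exact h
    exact ⟨i, ⟨hi1, him⟩, hxe.symm⟩
  rw [ae_iff, muI, Measure.restrict_apply' measurableSet_Ioc]
  exact measure_mono_null key (((Set.finite_Icc 1 m).image _).measure_zero volume)

lemma notMem_other {m : ℕ} (hm : 1 ≤ m) {i i' : ℕ} (h1 : 1 ≤ i) (h2 : i ≤ m)
    (h1' : 1 ≤ i') (h2' : i' ≤ m) (hne : i' ≠ i) {x : ℝ}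
    (hx : x ∈ Set.Ioo (((i:ℝ)-1)/m) ((i:ℝ)/m)) :
    x ∉ Set.Ioo (((i':ℝ)-1)/m) ((i':ℝ)/m) := by
  have hm0 : (0:ℝ) < m := by exact_mod_cast hm
  obtain ⟨ha, hb⟩ := hx
  rcases lt_or_gt_of_ne hne with h | h
  · intro ⟨_, hb'⟩
    have : (i':ℝ) ≤ (i:ℝ) - 1 := by push_cast; exact_mod_cast by omega
    have : (i':ℝ)/m ≤ ((i:ℝ)-1)/m := by gcongr
    linarith
  · intro ⟨ha', _⟩
    have : (i:ℝ) ≤ (i':ℝ) - 1 := by push_cast; exact_mod_cast by omega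
    have : (i:ℝ)/m ≤ ((i':ℝ)-1)/m := by gcongr
    linarith

noncomputable def stepRep (m : ℕ) (g : ℝ → ℝ) : ℝ → ℝ := fun x =>
  ∑ i ∈ Finset.Icc 1 m,
    Set.indicator (Set.Ioo (((i:ℝ)-1)/m) ((i:ℝ)/m)) (fun _ => g (ctr m i)) x

lemma stepRep_eval {m : ℕ} (hm : 1 ≤ m) {g : ℝ → ℝ} (hg : IsStepOn m g) {i : ℕ}
    (h1 : 1 ≤ i) (h2 : i ≤ m) {x : ℝ} (hx : x ∈ Set.Ioo (((i:ℝ)-1)/m) ((i:ℝ)/m)) :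
    stepRep m g x = g x := by
  unfold stepRep
  rw [Finset.sum_eq_single i]
  · rw [Set.indicator_of_mem hx]
    exact hg i h1 h2 _ (ctr_mem hm h1 h2) x hx
  · intro i' hi' hne
    rw [Finset.mem_Icc] at hi'
    exact Set.indicator_of_notMem (notMem_other hm h1 h2 hi'.1 hi'.2 hne hx) _
  · intro hni
    exact absurd (Finset.mem_Icc.mpr ⟨h1, h2⟩) hni

lemma stepOn_ae_eq {m : ℕ} (hm : 1 ≤ m) {g : ℝ → ℝ} (hg : IsStepOn m g) :
    g =ᵐ[muI] stepRep m g :=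
  (ae_cover m hm).mono fun _ ⟨_, h1, h2, hx⟩ => (stepRep_eval hm hg h1 h2 hx).symm

instance : IsFiniteMeasure muI := by
  constructor
  rw [muI, Measure.restrict_apply_univ, Real.volume_Ioc]
  simp

lemma stepRep_integrable (m : ℕ) (g : ℝ → ℝ) : Integrable (stepRep m g) muI := by
  apply integrable_finset_sum
  intro i _
  exact (integrable_const _).indicator measurableSet_Ioo

lemma stepOn_integrable {m : ℕ} (hm : 1 ≤ m) {g : ℝ → ℝ} (hg : IsStepOn m g) :
    Integrable g muI :=
  (stepRep_integrable m g).congr (stepOn_ae_eq hm hg).symm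

lemma Ioo_subset_unit {m i : ℕ} (hm : 1 ≤ m) (h1 : 1 ≤ i) (h2 : i ≤ m) :
    Set.Ioo (((i:ℝ)-1)/m) ((i:ℝ)/m) ⊆ Set.Ioc (0:ℝ) 1 := by
  have hm0 : (0:ℝ) < m := by exact_mod_cast hm
  intro x ⟨ha, hb⟩
  constructor
  · have h0 : (0:ℝ) ≤ ((i:ℝ)-1)/m := by
      apply div_nonneg _ hm0.le
      have : (1:ℝ) ≤ (i:ℝ) := by exact_mod_cast h1
      linarith
    linarith
  · have : (i:ℝ)/m ≤ 1 := by
      rw [div_le_one hm0]; exact_mod_cast h2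
    linarith

lemma stepOn_integral {m : ℕ} (hm : 1 ≤ m) {g : ℝ → ℝ} (hg : IsStepOn m g) :
    ∫ x, g x ∂muI = (∑ i ∈ Finset.Icc 1 m, g (ctr m i)) / m := by
  have hm0 : (0:ℝ) < m := by exact_mod_cast hm
  rw [integral_congr_ae (stepOn_ae_eq hm hg)]
  unfold stepRep
  rw [integral_finset_sum _ (fun i _ => (integrable_const _).indicator measurableSet_Ioo)]
  rw [Finset.sum_div]
  apply Finset.sum_congr rfl
  intro i hi
  rw [Finset.mem_Icc] at hi
  rw [integral_indicator_const _ measurableSet_Ioo]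
  rw [measureReal_def, muI, Measure.restrict_apply measurableSet_Ioo,
    Set.inter_eq_self_of_subset_left (Ioo_subset_unit hm hi.1 hi.2), Real.volume_Ioo]
  have : (i:ℝ)/m - ((i:ℝ)-1)/m = 1/m := by field_simp; ring
  rw [this, ENNReal.toReal_ofReal (by positivity)]
  rw [smul_eq_mul]
  ring

lemma stepOn_ae_bound {m : ℕ} (hm : 1 ≤ m) {g : ℝ → ℝ} (hg : IsStepOn m g) :
    ∃ C, ∀ᵐ x ∂muI, |g x| ≤ C := by
  refine ⟨∑ i ∈ Finset.Icc 1 m, |g (ctr m i)|, (ae_cover m hm).mono ?_⟩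
  rintro x ⟨i, h1, h2, hx⟩
  rw [hg i h1 h2 x hx _ (ctr_mem hm h1 h2)]
  exact Finset.single_le_sum (f := fun i => |g (ctr m i)|)
    (fun _ _ => abs_nonneg _) (Finset.mem_Icc.mpr ⟨h1, h2⟩)

lemma sum_shift (m : ℕ) (h : ℕ → ℝ) :
    ∑ r : Fin m, h (r.val + 1) = ∑ r ∈ Finset.Icc 1 m, h r := by
  rw [Fin.sum_univ_eq_sum_range (fun r => h (r+1)), ← Finset.Ico_add_one_right_eq_Icc,
    Finset.sum_Ico_eq_sum_range]
  simp [add_comm]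

lemma euclid_sum_apply {m : ℕ} (s : Finset (Fin m)) (a : Fin m → ℝ)
    (w : Fin m → EuclideanSpace ℝ (Fin m)) (r : Fin m) :
    (∑ j ∈ s, a j • w j) r = ∑ j ∈ s, a j * w j r := by
  induction s using Finset.induction with
  | empty => rfl
  | insert _ _ h ih => rw [Finset.sum_insert h, Finset.sum_insert h, ← ih]; rfl

lemma stepOn_span (m : ℕ) (hm : 1 ≤ m) (φ : ℕ → ℝ → ℝ)
    (horthm : ∀ i j, 1 ≤ i → i ≤ m → 1 ≤ j → j ≤ m →
      ∫ x, φ i x * φ j x ∂muI = if i = j then 1 else 0)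
    (hstepm : ∀ j, 1 ≤ j → j ≤ m → IsStepOn m (φ j))
    {g : ℝ → ℝ} (hg : IsStepOn m g) :
    ∃ c : ℕ → ℝ, ∀ i, 1 ≤ i → i ≤ m → ∀ x ∈ Set.Ioo (((i:ℝ)-1)/m) ((i:ℝ)/m),
      g x = ∑ j ∈ Finset.Icc 1 m, c j * φ j x := by
  haveI : Nonempty (Fin m) := ⟨⟨0, hm⟩⟩
  have hm0 : (0:ℝ) < m := by exact_mod_cast hm
  have hs0 : (0:ℝ) < Real.sqrt m := Real.sqrt_pos.mpr hm0
  have hss : Real.sqrt m * Real.sqrt m = m := Real.mul_self_sqrt hm0.le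
  -- discrete orthogonality
  have hd : ∀ i j, 1 ≤ i → i ≤ m → 1 ≤ j → j ≤ m →
      ∑ r ∈ Finset.Icc 1 m, φ i (ctr m r) * φ j (ctr m r)
        = if i = j then (m:ℝ) else 0 := by
    intro i j hi1 hi2 hj1 hj2
    have h1 := stepOn_integral hm ((hstepm i hi1 hi2).mul (hstepm j hj1 hj2))
    rw [horthm i j hi1 hi2 hj1 hj2] at h1
    have := (div_eq_iff hm0.ne').mp h1.symm
    rw [this]
    split <;> ring
  -- the orthonormal family in Euclidean space
  set v : Fin m → EuclideanSpace ℝ (Fin m) :=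
    fun j => (WithLp.equiv 2 _).symm (fun r => φ (j.val+1) (ctr m (r.val+1)) / Real.sqrt m)
    with hv_def
  have hv_app : ∀ j r : Fin m, v j r = φ (j.val+1) (ctr m (r.val+1)) / Real.sqrt m := by
    intro j r; rw [hv_def]; simp
  have hortho : Orthonormal ℝ v := by
    rw [orthonormal_iff_ite]
    intro i j
    have : (inner ℝ (v i) (v j) : ℝ) = ∑ r : Fin m, v i r * v j r := by
      simp [PiLp.inner_apply, RCLike.inner_apply]
      exact Finset.sum_congr rfl fun _ _ => mul_comm _ _
    rw [this]
    have : ∀ r : Fin m, v i r * v j r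
        = (φ (i.val+1) (ctr m (r.val+1)) * φ (j.val+1) (ctr m (r.val+1))) / m := by
      intro r; rw [hv_app, hv_app, div_mul_div_comm, hss]
    rw [Finset.sum_congr rfl fun r _ => this r, ← Finset.sum_div]
    rw [sum_shift m (fun r => φ (i.val+1) (ctr m r) * φ (j.val+1) (ctr m r))]
    rw [hd (i.val+1) (j.val+1) (by omega) (by omega) (by omega) (by omega)]
    have hiff : (i.val + 1 = j.val + 1) ↔ i = j := by
      constructor
      · intro h; exact Fin.ext (by omega)
      · intro h; rw [h]
    split
    · rw [if_pos (hiff.mp (by assumption))]; field_simp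
    · rw [if_neg (fun h => (by assumption : ¬ _) (hiff.mpr h))]; simp
  have hcard : Fintype.card (Fin m) = Module.finrank ℝ (EuclideanSpace ℝ (Fin m)) := by
    simp [finrank_euclideanSpace_fin]
  set B := basisOfLinearIndependentOfCardEqFinrank hortho.linearIndependent hcard with hB
  have hBv : ⇑B = v := coe_basisOfLinearIndependentOfCardEqFinrank _ _
  set u : EuclideanSpace ℝ (Fin m) :=
    (WithLp.equiv 2 _).symm (fun r => g (ctr m (r.val+1))) with hu_def
  have hu_app : ∀ r : Fin m, u r = g (ctr m (r.val+1)) := by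
    intro r; rw [hu_def]; simp
  have hurep : ∀ r : Fin m, u r = ∑ j : Fin m, B.repr u j * v j r := by
    intro r
    conv_lhs => rw [← B.sum_repr u]
    rw [← hBv]
    exact euclid_sum_apply _ _ _ r
  -- the coefficients
  refine ⟨fun j => if h : 1 ≤ j ∧ j ≤ m then B.repr u ⟨j-1, by omega⟩ / Real.sqrt m else 0,
    ?_⟩
  intro i hi1 hi2 x hx
  have hgx : g x = g (ctr m i) := hg i hi1 hi2 x hx _ (ctr_mem hm hi1 hi2)
  have hir : i = (⟨i-1, by omega⟩ : Fin m).val + 1 := by simp; omega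
  rw [hgx, hir, ← hu_app ⟨i-1, by omega⟩, hurep]
  rw [← sum_shift m]
  apply Finset.sum_congr rfl
  intro j _
  have hjd : (1 ≤ j.val + 1 ∧ j.val + 1 ≤ m) := by omega
  simp only [dif_pos hjd]
  have : (⟨j.val + 1 - 1, by omega⟩ : Fin m) = j := Fin.ext (by simp)
  rw [this, hv_app]
  have hφx : φ (j.val+1) x = φ (j.val+1) (ctr m ((⟨i-1, by omega⟩ : Fin m).val + 1)) := by
    rw [← hir]
    exact hstepm _ (by omega) (by omega) i hi1 hi2 x hx _ (ctr_mem hm hi1 hi2)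
  rw [hφx]
  field_simp

lemma abs_sign_le_one (y : ℝ) : |Real.sign y| ≤ 1 := by
  rcases lt_trichotomy y 0 with h | h | h
  · rw [Real.sign_of_neg h]; norm_num
  · rw [h, Real.sign_zero]; norm_num
  · rw [Real.sign_of_pos h]; norm_num

lemma mul_sign_eq_abs (y : ℝ) : y * Real.sign y = |y| := by
  rcases lt_trichotomy y 0 with h | h | h
  · rw [Real.sign_of_neg h, abs_of_neg h]; ring
  · rw [h]; simp
  · rw [Real.sign_of_pos h, abs_of_pos h]; ring

/-- Sidon-type inequality for discrete orthonormal systems. -/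
theorem discrete_sidon (m : ℕ → ℕ) (hm1 : m 1 = 1) (hmono : ∀ k, 1 ≤ k → m k < m (k+1))
    (φ : ℕ → ℝ → ℝ) (hφ1 : ∀ x, φ 1 x = 1)
    (horth : ∀ i j, 1 ≤ i → 1 ≤ j →
      (∫ x in (0:ℝ)..1, φ i x * φ j x) = if i = j then 1 else 0)
    (hstep : ∀ k, 1 ≤ k → ∀ j, 1 ≤ j → j ≤ m k → ∀ i, 1 ≤ i → i ≤ m k →
      ∀ x ∈ Set.Ioo (((i:ℝ)-1)/(m k)) ((i:ℝ)/(m k)),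
        ∀ y ∈ Set.Ioo (((i:ℝ)-1)/(m k)) ((i:ℝ)/(m k)), φ j x = φ j y)
    (horth2 : ∀ k, 2 ≤ k → ∀ n, m k < n → ∀ j, 2 ≤ j → j ≤ m k →
      (∫ x in (0:ℝ)..1, (φ n x)^2 * φ j x) = 0)
    (M : ℝ) (hM : 0 < M) (hbound : ∀ n, 1 ≤ n → essSupNorm01 (φ n) ≤ M)
    (nseq : ℕ → ℕ) (hn1 : nseq 1 = 1)
    (hnk : ∀ k, 2 ≤ k → m (k-1) < nseq k ∧ nseq k ≤ m k)
    (N l : ℕ) (hl : 1 ≤ l) (hN : l + 1 ≤ N)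
    (p : ℕ → ℝ → ℝ)
    (hp : ∀ k, l+1 ≤ k → k ≤ N →
      ∃ a : ℕ → ℝ, p k = fun x => ∑ j ∈ Finset.Icc 1 (m l), a j * φ j x) :
    (1/M) * ∑ k ∈ Finset.Icc (l+1) N, l1Norm01 (p k) ≤
      essSupNorm01 (fun x => ∑ k ∈ Finset.Icc (l+1) N, p k x * φ (nseq k) x) := by
  
  -- conversions
  have hint : ∀ F : ℝ → ℝ, (∫ x in (0:ℝ)..1, F x) = ∫ x, F x ∂muI := fun F => by
    rw [intervalIntegral.integral_of_le zero_le_one]; rfl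
  have hres : volume.restrict (Set.Icc (0:ℝ) 1) = muI :=
    (Measure.restrict_congr_set MeasureTheory.Ioc_ae_eq_Icc).symm
  have hess : ∀ h : ℝ → ℝ, essSupNorm01 h = essSup (fun x => |h x|) muI := fun h => by
    rw [essSupNorm01, hres]
  -- monotonicity of m
  have hmle : ∀ a b, 1 ≤ a → a ≤ b → m a ≤ m b := by
    intro a b ha hab
    have key : ∀ d, m a ≤ m (a + d) := by
      intro d
      induction d with
      | zero => simp
      | succ d ih =>
        have h2 := hmono (a+d) (by omega)
        have h3 : a + (d+1) = (a+d)+1 := by omega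
        rw [h3]; omega
    have := key (b - a)
    rwa [Nat.add_sub_cancel' hab] at this
  have hmpos : ∀ k, 1 ≤ k → 1 ≤ m k := fun k hk => by
    have := hmle 1 k le_rfl hk; omega
  set MM := m N with hMM
  have hNl : l ≤ N := by omega
  have hN1 : 1 ≤ N := by omega
  have hMM1 : 1 ≤ MM := hmpos N hN1
  have horth' : ∀ i j, 1 ≤ i → 1 ≤ j →
      ∫ x, φ i x * φ j x ∂muI = if i = j then 1 else 0 := fun i j hi hj => by
    rw [← hint]; exact horth i j hi hj
  have horth2' : ∀ k, 2 ≤ k → ∀ n, m k < n → ∀ j, 2 ≤ j → j ≤ m k →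
      ∫ x, (φ n x)^2 * φ j x ∂muI = 0 := fun k hk n hn j hj1 hj2 => by
    rw [← hint]; exact horth2 k hk n hn j hj1 hj2
  have hstepφ : ∀ K, 1 ≤ K → ∀ j, 1 ≤ j → j ≤ m K → IsStepOn (m K) (φ j) :=
    fun K hK j h1 h2 => hstep K hK j h1 h2
  have hintg : ∀ h : ℝ → ℝ, IsStepOn MM h → Integrable h muI :=
    fun h hh => stepOn_integrable hMM1 hh
  -- orthogonality of low step functions with high φ's
  have key0 : ∀ K, 1 ≤ K → K ≤ N → ∀ g : ℝ → ℝ, IsStepOn (m K) g → ∀ n, m K < n → n ≤ MM →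
      ∫ x, g x * φ n x ∂muI = 0 := by
    intro K hK1 hKN g hg n hn hnMM
    have hn1 : 1 ≤ n := by have := hmpos K hK1; omega
    obtain ⟨c, hc⟩ := stepOn_span (m K) (hmpos K hK1) φ
      (fun i j hi1 hi2 hj1 hj2 => horth' i j hi1 hj1)
      (fun j h1 h2 => hstepφ K hK1 j h1 h2) hg
    have hae : ∀ᵐ x ∂muI, g x * φ n x
        = ∑ j ∈ Finset.Icc 1 (m K), c j * (φ j x * φ n x) := by
      refine (ae_cover (m K) (hmpos K hK1)).mono ?_
      rintro x ⟨i, h1, h2, hx⟩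
      rw [hc i h1 h2 x hx, Finset.sum_mul]
      exact Finset.sum_congr rfl fun j _ => by ring
    rw [integral_congr_ae hae, integral_finset_sum]
    · apply Finset.sum_eq_zero
      intro j hj
      rw [Finset.mem_Icc] at hj
      have hjm : j ≤ MM := le_trans hj.2 (hmle K N hK1 hKN)
      rw [integral_const_mul, horth' j n hj.1 hn1, if_neg (by omega)]
      ring
    · intro j hj
      rw [Finset.mem_Icc] at hj
      have hjm : j ≤ MM := le_trans hj.2 (hmle K N hK1 hKN)
      exact (hintg _ (((hstepφ N hN1 j hj.1 hjm).mul
        (hstepφ N hN1 n hn1 hnMM)))).const_mul _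
  -- squares of high φ's against low step functions
  have key1 : ∀ K, 1 ≤ K → K ≤ N → ∀ g : ℝ → ℝ, IsStepOn (m K) g → ∀ n, m K < n → n ≤ MM →
      ∫ x, (φ n x)^2 * g x ∂muI = ∫ x, g x ∂muI := by
    intro K hK1 hKN g hg n hn hnMM
    have hn1 : 1 ≤ n := by have := hmpos K hK1; omega
    obtain ⟨c, hc⟩ := stepOn_span (m K) (hmpos K hK1) φ
      (fun i j hi1 hi2 hj1 hj2 => horth' i j hi1 hj1)
      (fun j h1 h2 => hstepφ K hK1 j h1 h2) hg
    have hstepn : IsStepOn MM (φ n) := hstepφ N hN1 n hn1 hnMM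
    have hsq : ∀ j, 1 ≤ j → j ≤ m K → ∫ x, (φ n x)^2 * φ j x ∂muI
        = if j = 1 then 1 else 0 := by
      intro j h1 h2
      rcases eq_or_lt_of_le h1 with h | h
      · rw [if_pos h.symm, ← h]
        have : ∀ x, (φ n x)^2 * φ 1 x = φ n x * φ n x := by
          intro x; rw [hφ1]; ring
        rw [integral_congr_ae (Filter.Eventually.of_forall this), horth' n n hn1 hn1,
          if_pos rfl]
      · rw [if_neg (by omega)]
        have hK2 : 2 ≤ K := by
          by_contra hcon
          have hKe : K = 1 := by omega
          rw [hKe, hm1] at h2; omega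
        exact horth2' K hK2 n hn j (by omega) h2
    have hae : ∀ᵐ x ∂muI, (φ n x)^2 * g x
        = ∑ j ∈ Finset.Icc 1 (m K), c j * ((φ n x)^2 * φ j x) := by
      refine (ae_cover (m K) (hmpos K hK1)).mono ?_
      rintro x ⟨i, h1, h2, hx⟩
      rw [hc i h1 h2 x hx, Finset.mul_sum]
      exact Finset.sum_congr rfl fun j _ => by ring
    have hae2 : ∀ᵐ x ∂muI, g x = ∑ j ∈ Finset.Icc 1 (m K), c j * φ j x := by
      refine (ae_cover (m K) (hmpos K hK1)).mono ?_
      rintro x ⟨i, h1, h2, hx⟩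
      exact hc i h1 h2 x hx
    have hjint : ∀ j, 1 ≤ j → j ≤ m K → Integrable (fun x => φ j x) muI := by
      intro j h1 h2
      exact hintg _ (hstepφ N hN1 j h1 (le_trans h2 (hmle K N hK1 hKN)))
    rw [integral_congr_ae hae, integral_congr_ae hae2]
    rw [integral_finset_sum, integral_finset_sum]
    · apply Finset.sum_congr rfl
      intro j hj
      rw [Finset.mem_Icc] at hj
      rw [integral_const_mul, integral_const_mul, hsq j hj.1 hj.2]
      have : ∫ x, φ j x ∂muI = if j = 1 then 1 else 0 := by
        have : ∀ x, φ j x = φ j x * φ 1 x := by intro x; rw [hφ1]; ring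
        rw [integral_congr_ae (Filter.Eventually.of_forall this), horth' j 1 hj.1 le_rfl]
      rw [this]
    · intro j hj
      rw [Finset.mem_Icc] at hj
      exact (hjint j hj.1 hj.2).const_mul _
    · intro j hj
      rw [Finset.mem_Icc] at hj
      have : Integrable (fun x => (φ n x)^2 * φ j x) muI := by
        apply hintg
        have h2 : IsStepOn MM (fun x => (φ n x)^2) := by
          have := hstepn.mul hstepn
          intro i a b x hx y hy
          simp only [sq]
          exact this i a b x hx y hy
        exact h2.mul (hstepφ N hN1 j hj.1 (le_trans hj.2 (hmle K N hK1 hKN)))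
      exact this.const_mul _
  -- the sign functions, Riesz products and partial sums
  set sg : ℕ → ℝ → ℝ := fun k x => Real.sign (p k x) with hsg_def
  set G : ℕ → ℝ → ℝ :=
    fun t x => ∏ k ∈ Finset.Icc (l+1) t, (1 + sg k x * φ (nseq k) x / M) with hG_def
  set F : ℕ → ℝ → ℝ := fun t x => ∑ k ∈ Finset.Icc (l+1) t, p k x * φ (nseq k) x
    with hF_def
  -- properties of nseq for k ≥ l+1
  have hnseq : ∀ k, l+1 ≤ k → k ≤ N → 1 ≤ nseq k ∧ m (k-1) < nseq k ∧ nseq k ≤ MM := by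
    intro k h1 h2
    obtain ⟨ha, hb⟩ := hnk k (by omega)
    have := hmpos (k-1) (by omega)
    exact ⟨by omega, ha, le_trans hb (hmle k N (by omega) h2)⟩
  -- step function properties
  have hstep_p : ∀ k, l+1 ≤ k → k ≤ N → ∀ K, l ≤ K → K ≤ N → IsStepOn (m K) (p k) := by
    intro k h1 h2 K hK1 hK2
    obtain ⟨a, ha⟩ := hp k h1 h2
    rw [ha]
    apply IsStepOn.sum
    intro j hj
    rw [Finset.mem_Icc] at hj
    exact (IsStepOn.const _ _).mul
      (hstepφ K (by omega) j hj.1 (le_trans hj.2 (hmle l K hl hK1)))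
  have hstep_sg : ∀ k, l+1 ≤ k → k ≤ N → ∀ K, l ≤ K → K ≤ N → IsStepOn (m K) (sg k) :=
    fun k h1 h2 K hK1 hK2 => (hstep_p k h1 h2 K hK1 hK2).comp Real.sign
  have hstep_pn : ∀ k, l+1 ≤ k → k ≤ N → ∀ K, k ≤ K → K ≤ N →
      IsStepOn (m K) (φ (nseq k)) := by
    intro k h1 h2 K hK1 hK2
    obtain ⟨ha, hb, hc⟩ := hnseq k h1 h2
    have h4 : nseq k ≤ m k := (hnk k (by omega)).2
    exact hstepφ K (by omega) _ ha (le_trans h4 (hmle k K (by omega) hK1))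
  have hstep_G : ∀ t K, l ≤ t → t ≤ K → K ≤ N → IsStepOn (m K) (G t) := by
    intro t K h1 h2 h3
    apply IsStepOn.prod
    intro k hk
    rw [Finset.mem_Icc] at hk
    have h5 : IsStepOn (m K) (fun x => sg k x * φ (nseq k) x / M) :=
      ((hstep_sg k hk.1 (by omega) K (by omega) h3).mul
        (hstep_pn k hk.1 (by omega) K (by omega) h3)).comp (· / M)
    exact (IsStepOn.const _ 1).add h5
  have hstep_F : ∀ t K, l ≤ t → t ≤ K → K ≤ N → IsStepOn (m K) (F t) := by
    intro t K h1 h2 h3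
    apply IsStepOn.sum
    intro k hk
    rw [Finset.mem_Icc] at hk
    exact (hstep_p k hk.1 (by omega) K (by omega) h3).mul
      (hstep_pn k hk.1 (by omega) K (by omega) h3)
  -- invariance of integrals against the Riesz product
  have keyE : ∀ h : ℝ → ℝ, (∀ K, l ≤ K → K ≤ N → IsStepOn (m K) h) →
      ∀ t, l ≤ t → t ≤ N → ∫ x, h x * G t x ∂muI = ∫ x, h x ∂muI := by
    intro h hh t htl
    induction t, htl using Nat.le_induction with
    | base =>
      intro _
      have : ∀ x, h x * G l x = h x := by
        intro x
        rw [hG_def]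
        simp only [Finset.Icc_eq_empty (by omega : ¬ l+1 ≤ l), Finset.prod_empty, mul_one]
      rw [integral_congr_ae (Filter.Eventually.of_forall this)]
    | succ t ht ih =>
      intro htN
      have ihe := ih (by omega)
      have hGsucc : ∀ x, G (t+1) x = G t x * (1 + sg (t+1) x * φ (nseq (t+1)) x / M) := by
        intro x
        rw [hG_def]
        exact Finset.prod_Icc_succ_top (by omega : l+1 ≤ t+1) _
      have hpt : ∀ x, h x * G (t+1) x
          = h x * G t x + (h x * G t x * sg (t+1) x / M) * φ (nseq (t+1)) x := by
        intro x; rw [hGsucc]; ring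
      have hsM : IsStepOn MM (fun x => h x * G t x) :=
        (hh N hNl le_rfl).mul (hstep_G t N ht (by omega) le_rfl)
      have hsM2 : IsStepOn MM (fun x => (h x * G t x * sg (t+1) x / M) * φ (nseq (t+1)) x) :=
        ((hsM.mul (hstep_sg (t+1) (by omega) htN N hNl le_rfl)).comp (· / M)).mul
          (hstep_pn (t+1) (by omega) htN N (by omega) le_rfl)
      rw [integral_congr_ae (Filter.Eventually.of_forall hpt),
        integral_add (hintg _ hsM) (hintg _ hsM2), ihe]
      have hz : ∫ x, (h x * G t x * sg (t+1) x / M) * φ (nseq (t+1)) x ∂muI = 0 := by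
        apply key0 t (by omega) (by omega)
        · exact ((hh t ht (by omega)).mul (hstep_G t t ht le_rfl (by omega))).mul
            (hstep_sg (t+1) (by omega) htN t ht (by omega)) |>.comp (· / M)
        · have := (hnseq (t+1) (by omega) htN).2.1
          simpa using this
        · exact (hnseq (t+1) (by omega) htN).2.2
      rw [hz, add_zero]
  -- the main identity
  have keyM : ∀ t, l ≤ t → t ≤ N → ∫ x, F t x * G t x ∂muI
      = ∑ k ∈ Finset.Icc (l+1) t, (∫ x, |p k x| ∂muI) / M := by
    intro t htl
    induction t, htl using Nat.le_induction with
    | base =>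
      intro _
      have : ∀ x, F l x * G l x = 0 := by
        intro x
        rw [hF_def]
        simp only [Finset.Icc_eq_empty (by omega : ¬ l+1 ≤ l), Finset.sum_empty, zero_mul]
      rw [integral_congr_ae (Filter.Eventually.of_forall this),
        Finset.Icc_eq_empty (by omega : ¬ l+1 ≤ l), Finset.sum_empty, integral_zero]
    | succ t ht ih =>
      intro htN
      have ihe := ih (by omega)
      have hGsucc : ∀ x, G (t+1) x = G t x * (1 + sg (t+1) x * φ (nseq (t+1)) x / M) := by
        intro x
        rw [hG_def]
        exact Finset.prod_Icc_succ_top (by omega : l+1 ≤ t+1) _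
      have hFsucc : ∀ x, F (t+1) x = F t x + p (t+1) x * φ (nseq (t+1)) x := by
        intro x
        rw [hF_def]
        exact Finset.sum_Icc_succ_top (by omega : l+1 ≤ t+1) _
      have hpt : ∀ x, F (t+1) x * G (t+1) x
          = (F t x * G t x + (F t x * G t x * sg (t+1) x / M) * φ (nseq (t+1)) x)
            + ((p (t+1) x * G t x) * φ (nseq (t+1)) x
              + (φ (nseq (t+1)) x)^2 * (p (t+1) x * sg (t+1) x * G t x / M)) := by
        intro x; rw [hGsucc, hFsucc]; ring
      -- step function facts
      have hsFG : IsStepOn MM (fun x => F t x * G t x) :=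
        (hstep_F t N ht (by omega) le_rfl).mul (hstep_G t N ht (by omega) le_rfl)
      have hsφ : IsStepOn MM (φ (nseq (t+1))) :=
        hstep_pn (t+1) (by omega) htN N (by omega) le_rfl
      have hssg : IsStepOn MM (sg (t+1)) := hstep_sg (t+1) (by omega) htN N hNl le_rfl
      have hsp : IsStepOn MM (p (t+1)) := hstep_p (t+1) (by omega) htN N hNl le_rfl
      have hsG : IsStepOn MM (G t) := hstep_G t N ht (by omega) le_rfl
      have hs1 : IsStepOn MM (fun x => (F t x * G t x * sg (t+1) x / M) * φ (nseq (t+1)) x) :=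
        ((hsFG.mul hssg).comp (· / M)).mul hsφ
      have hs2 : IsStepOn MM (fun x => (p (t+1) x * G t x) * φ (nseq (t+1)) x) :=
        (hsp.mul hsG).mul hsφ
      have hs3 : IsStepOn MM
          (fun x => (φ (nseq (t+1)) x)^2 * (p (t+1) x * sg (t+1) x * G t x / M)) := by
        have hsq : IsStepOn MM (fun x => (φ (nseq (t+1)) x)^2) := by
          intro i a b x hx y hy
          simp only [sq]
          exact (hsφ.mul hsφ) i a b x hx y hy
        exact hsq.mul (((hsp.mul hssg).mul hsG).comp (· / M))
      have hnn : m t < nseq (t+1) := by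
        have := (hnseq (t+1) (by omega) htN).2.1
        simpa using this
      have hnM : nseq (t+1) ≤ MM := (hnseq (t+1) (by omega) htN).2.2
      -- zero terms
      have hz1 : ∫ x, (F t x * G t x * sg (t+1) x / M) * φ (nseq (t+1)) x ∂muI = 0 := by
        apply key0 t (by omega) (by omega) _ ?_ _ hnn hnM
        exact (((hstep_F t t ht le_rfl (by omega)).mul
          (hstep_G t t ht le_rfl (by omega))).mul
          (hstep_sg (t+1) (by omega) htN t ht (by omega))).comp (· / M)
      have hz2 : ∫ x, (p (t+1) x * G t x) * φ (nseq (t+1)) x ∂muI = 0 := by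
        apply key0 t (by omega) (by omega) _ ?_ _ hnn hnM
        exact (hstep_p (t+1) (by omega) htN t ht (by omega)).mul
          (hstep_G t t ht le_rfl (by omega))
      -- the square term
      have hsq : ∫ x, (φ (nseq (t+1)) x)^2 * (p (t+1) x * sg (t+1) x * G t x / M) ∂muI
          = (∫ x, |p (t+1) x| ∂muI) / M := by
        rw [key1 t (by omega) (by omega) _ ?_ _ hnn hnM]
        · have habs : ∀ x, p (t+1) x * sg (t+1) x * G t x / M
              = (|p (t+1) x| / M) * G t x := by
            intro x
            rw [hsg_def]
            simp only
            rw [mul_sign_eq_abs (p (t+1) x)]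
            ring
          rw [integral_congr_ae (Filter.Eventually.of_forall habs)]
          rw [keyE (fun x => |p (t+1) x| / M) ?_ t ht (by omega)]
          · rw [integral_div]
          · intro K hK1 hK2
            exact (hstep_p (t+1) (by omega) htN K hK1 hK2).comp (fun y => |y| / M)
        · exact ((hstep_p (t+1) (by omega) htN t ht (by omega)).mul
            (hstep_sg (t+1) (by omega) htN t ht (by omega))).mul
            (hstep_G t t ht le_rfl (by omega)) |>.comp (· / M)
      have hiA : Integrable (fun x => F t x * G t x
          + (F t x * G t x * sg (t+1) x / M) * φ (nseq (t+1)) x) muI :=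
        hintg _ (hsFG.add hs1)
      have hiB : Integrable (fun x => (p (t+1) x * G t x) * φ (nseq (t+1)) x
          + (φ (nseq (t+1)) x)^2 * (p (t+1) x * sg (t+1) x * G t x / M)) muI :=
        hintg _ (hs2.add hs3)
      rw [integral_congr_ae (Filter.Eventually.of_forall hpt)]
      rw [integral_add hiA hiB,
        integral_add (hintg _ hsFG) (hintg _ hs1),
        integral_add (hintg _ hs2) (hintg _ hs3)]
      rw [ihe, hz1, hz2, hsq]
      rw [Finset.sum_Icc_succ_top (by omega : l+1 ≤ t+1)]
      ring
  -- total mass of the Riesz product is 1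
  have hG1 : ∫ x, G N x ∂muI = 1 := by
    have h1 := keyE (fun _ => 1) (fun K _ _ => IsStepOn.const _ 1) N hNl le_rfl
    simp only [one_mul] at h1
    rw [h1, integral_const, smul_eq_mul, mul_one]
    rw [measureReal_def, muI, Measure.restrict_apply_univ, Real.volume_Ioc]
    norm_num
  -- a.e. bounds on the φ (nseq k)
  have hφbd : ∀ k, l+1 ≤ k → k ≤ N → ∀ᵐ x ∂muI, |φ (nseq k) x| ≤ M := by
    intro k h1 h2
    obtain ⟨hn1', hn2, hn3⟩ := hnseq k h1 h2
    have hstepn : IsStepOn MM (φ (nseq k)) := hstep_pn k h1 h2 N (by omega) le_rfl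
    obtain ⟨C, hC⟩ := stepOn_ae_bound hMM1 hstepn
    have hb : Filter.IsBoundedUnder (· ≤ ·) (ae muI) (fun x => |φ (nseq k) x|) :=
      ⟨C, Filter.eventually_map.mpr hC⟩
    have hae := ae_le_essSup hb
    have hM' : essSup (fun x => |φ (nseq k) x|) muI ≤ M := by
      rw [← hess]; exact hbound _ hn1'
    exact hae.mono fun x hx => le_trans hx hM'
  -- nonnegativity of the Riesz product
  have hGnn : ∀ᵐ x ∂muI, 0 ≤ G N x := by
    have hall : ∀ᵐ x ∂muI, ∀ k ∈ Finset.Icc (l+1) N, |φ (nseq k) x| ≤ M := by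
      rw [MeasureTheory.ae_all_iff]
      intro k
      by_cases hk : k ∈ Finset.Icc (l+1) N
      · rw [Finset.mem_Icc] at hk
        exact (hφbd k hk.1 hk.2).mono fun x h _ => h
      · exact Filter.Eventually.of_forall fun x h => absurd h hk
    refine hall.mono ?_
    intro x hx
    rw [hG_def]
    simp only
    apply Finset.prod_nonneg
    intro k hk
    have h1 := hx k hk
    have h2 : |sg k x * φ (nseq k) x / M| ≤ 1 := by
      rw [abs_div, abs_mul, abs_of_pos hM, div_le_one hM]
      calc |sg k x| * |φ (nseq k) x| ≤ 1 * M :=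
            mul_le_mul (abs_sign_le_one _) h1 (abs_nonneg _) one_pos.le
        _ = M := one_mul M
    have h3 := neg_abs_le (sg k x * φ (nseq k) x / M)
    linarith
  -- the essential bound on F N
  set Cess : ℝ := essSup (fun x => |F N x|) muI with hCess
  have hFbd : ∀ᵐ x ∂muI, |F N x| ≤ Cess := by
    obtain ⟨C0, hC0⟩ := stepOn_ae_bound hMM1 (hstep_F N N hNl le_rfl le_rfl)
    exact ae_le_essSup ⟨C0, Filter.eventually_map.mpr hC0⟩
  -- final comparison
  have hstepFG : IsStepOn MM (fun x => F N x * G N x) :=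
    (hstep_F N N hNl le_rfl le_rfl).mul (hstep_G N N hNl le_rfl le_rfl)
  have step1 : ∫ x, F N x * G N x ∂muI ≤ ∫ x, Cess * G N x ∂muI := by
    apply integral_mono_ae (hintg _ hstepFG)
      ((hintg _ (hstep_G N N hNl le_rfl le_rfl)).const_mul Cess)
    filter_upwards [hFbd, hGnn] with x hx hg
    exact mul_le_mul_of_nonneg_right (le_trans (le_abs_self _) hx) hg
  have step2 : ∫ x, Cess * G N x ∂muI = Cess := by
    rw [integral_const_mul, hG1, mul_one]
  have hL : (1/M) * ∑ k ∈ Finset.Icc (l+1) N, l1Norm01 (p k)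
      = ∑ k ∈ Finset.Icc (l+1) N, (∫ x, |p k x| ∂muI)/M := by
    rw [Finset.mul_sum]
    apply Finset.sum_congr rfl
    intro k hk
    rw [l1Norm01, hint]
    ring
  have hgoal : essSupNorm01 (fun x => ∑ k ∈ Finset.Icc (l+1) N, p k x * φ (nseq k) x)
      = Cess := by
    rw [hess, hCess]
  rw [hgoal, hL, ← keyM N hNl le_rfl]
  exact le_trans step1 (le_of_eq step2)
end
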